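/- arXiv:1311.6292 — 3 statements merged into one kernel-verified Lean document; each statement's English description precedes it below -/
import Mathlib

section
/- Let A(n,k) denote the number of 132-avoiding permutations σ of {1,…,n} with mmp(0,k,0,0)(σ) = 0. Then for all integers n ≥ 2 and 1 ≤ k ≤ n, A(n,k) = A(n−1,k) + Σ_{i=1}^{k−1} Cat(i−1)·A(n−i, k−i), where Cat(m) denotes the m-th Catalan number. -/
/-- A permutation `σ` of `{1,…,n}` (as a permutation of `Fin n`) avoids the pattern 132 if
there are no indices `i < j < k` with `σ i < σ k < σ j`. -/
def Avoids132 (n : ℕ) (σ : Equiv.Perm (Fin n)) : Prop :=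
  ∀ i j k : Fin n, i < j → j < k → ¬(σ i < σ k ∧ σ k < σ j)

/-- `mmp n a b c d σ` is the number of indices `i` matching the marked mesh pattern
`MMP(a,b,c,d)` in `σ`: there are at least `a` indices `j > i` with `σ j > σ i`,
at least `b` indices `j < i` with `σ j > σ i`, at least `c` indices `j < i` with
`σ j < σ i`, and at least `d` indices `j > i` with `σ j < σ i`. -/
noncomputable def mmp (n a b c d : ℕ) (σ : Equiv.Perm (Fin n)) : ℕ :=
  Nat.card {i : Fin n |
    a ≤ Nat.card {j : Fin n | i < j ∧ σ i < σ j} ∧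
    b ≤ Nat.card {j : Fin n | j < i ∧ σ i < σ j} ∧
    c ≤ Nat.card {j : Fin n | j < i ∧ σ j < σ i} ∧
    d ≤ Nat.card {j : Fin n | i < j ∧ σ j < σ i}}

/-- `A n k` is the number of 132-avoiding permutations `σ` of `{1,…,n}` with
`mmp(0,k,0,0)(σ) = 0`. -/
noncomputable def A (n k : ℕ) : ℕ :=
  Nat.card {σ : Equiv.Perm (Fin n) | Avoids132 n σ ∧ mmp n 0 k 0 0 σ = 0}

noncomputable def lcnt {n : ℕ} (σ : Equiv.Perm (Fin n)) (i : Fin n) : ℕ :=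
  Nat.card {j : Fin n | j < i ∧ σ i < σ j}

noncomputable def bb (n k : ℕ) : ℕ :=
  Nat.card {σ : Equiv.Perm (Fin n) | Avoids132 n σ ∧ ∀ i, lcnt σ i < k}

section glue

variable (n p : ℕ) (hp : p < n) (α : Equiv.Perm (Fin p)) (β : Equiv.Perm (Fin (n-1-p)))

def gf (i : Fin n) : Fin n :=
  if h : i.val < p then ⟨(n-1-p) + (α ⟨i.val, h⟩).val, by have := (α ⟨i.val, h⟩).isLt; omega⟩
  else if h2 : i.val = p then ⟨n-1, by omega⟩
  else ⟨(β ⟨i.val - (p+1), by have := i.isLt; omega⟩).val,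
    by have := (β ⟨i.val - (p+1), by have := i.isLt; omega⟩).isLt; omega⟩

def gg (v : Fin n) : Fin n :=
  if h : v.val < n-1-p then ⟨p+1+(β.symm ⟨v.val, h⟩).val,
    by have := (β.symm ⟨v.val, h⟩).isLt; omega⟩
  else if h2 : v.val < n-1 then ⟨(α.symm ⟨v.val - (n-1-p), by omega⟩).val,
    by have := (α.symm ⟨v.val - (n-1-p), by omega⟩).isLt; omega⟩
  else ⟨p, hp⟩

lemma gf_left (i : Fin n) (h : i.val < p) :
    (gf n p hp α β i).val = (n-1-p) + (α ⟨i.val, h⟩).val := by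
  rw [gf, dif_pos h]

lemma gf_mid (i : Fin n) (h : i.val = p) : (gf n p hp α β i).val = n-1 := by
  rw [gf, dif_neg (by omega), dif_pos h]

lemma gf_right (i : Fin n) (h : p < i.val) :
    (gf n p hp α β i).val = (β ⟨i.val - (p+1), by have := i.isLt; omega⟩).val := by
  rw [gf, dif_neg (by omega), dif_neg (by omega)]

lemma gg_lo (v : Fin n) (h : v.val < n-1-p) :
    (gg n p hp α β v).val = p+1+(β.symm ⟨v.val, h⟩).val := by
  rw [gg, dif_pos h]

lemma gg_hi (v : Fin n) (h : ¬ v.val < n-1-p) (h2 : v.val < n-1) :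
    (gg n p hp α β v).val = (α.symm ⟨v.val - (n-1-p), by omega⟩).val := by
  rw [gg, dif_neg h, dif_pos h2]

lemma gg_top (v : Fin n) (h2 : ¬ v.val < n-1) : (gg n p hp α β v).val = p := by
  rw [gg, dif_neg (by omega), dif_neg h2]


attribute [irreducible] gf gg

lemma gg_gf (i : Fin n) : gg n p hp α β (gf n p hp α β i) = i := by
  apply Fin.ext
  have hi := i.isLt
  by_cases h : i.val < p
  · have e := gf_left n p hp α β i h
    have hα := (α ⟨i.val, h⟩).isLt
    rw [gg_hi n p hp α β _ (by omega) (by omega)]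
    have key : ∀ z : Fin p, z.val = (α ⟨i.val, h⟩).val → (α.symm z).val = i.val := by
      intro z hz
      rw [Fin.ext hz, Equiv.symm_apply_apply]
    exact key _ (by show (gf n p hp α β i).val - (n-1-p) = _; omega)
  · by_cases h2 : i.val = p
    · have e := gf_mid n p hp α β i h2
      rw [gg_top n p hp α β _ (by omega), h2]
    · have e := gf_right n p hp α β i (by omega)
      have hβ := (β ⟨i.val - (p+1), by omega⟩).isLt
      rw [gg_lo n p hp α β _ (by omega)]
      have key : ∀ z : Fin (n-1-p), z.val = (β ⟨i.val - (p+1), by omega⟩).val →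
          p+1+(β.symm z).val = i.val := by
        intro z hz
        rw [Fin.ext hz, Equiv.symm_apply_apply]
        show p+1+(i.val - (p+1)) = i.val
        omega
      exact key _ (by show (gf n p hp α β i).val = _; omega)

lemma gf_gg (v : Fin n) : gf n p hp α β (gg n p hp α β v) = v := by
  apply Fin.ext
  have hv := v.isLt
  by_cases h : v.val < n-1-p
  · have e := gg_lo n p hp α β v h
    have hβ := (β.symm ⟨v.val, h⟩).isLt
    rw [gf_right n p hp α β _ (by omega)]
    have key : ∀ z : Fin (n-1-p), z.val = (β.symm ⟨v.val, h⟩).val → (β z).val = v.val := by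
      intro z hz
      rw [Fin.ext hz, Equiv.apply_symm_apply]
    exact key _ (by show (gg n p hp α β v).val - (p+1) = _; omega)
  · by_cases h2 : v.val < n-1
    · have e := gg_hi n p hp α β v h h2
      have hα := (α.symm ⟨v.val - (n-1-p), by omega⟩).isLt
      rw [gf_left n p hp α β _ (by omega)]
      have key : ∀ z : Fin p, z.val = (α.symm ⟨v.val - (n-1-p), by omega⟩).val →
          (n-1-p) + (α z).val = v.val := by
        intro z hz
        rw [Fin.ext hz, Equiv.apply_symm_apply]
        show (n-1-p) + (v.val - (n-1-p)) = v.val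
        omega
      exact key _ (by show (gg n p hp α β v).val = _; omega)
    · have e := gg_top n p hp α β v h2
      rw [gf_mid n p hp α β _ e]
      omega

def glue : Equiv.Perm (Fin n) :=
  ⟨gf n p hp α β, gg n p hp α β, gg_gf n p hp α β, gf_gg n p hp α β⟩

lemma glue_val_left (i : Fin n) (h : i.val < p) :
    ((glue n p hp α β) i).val = (n-1-p) + (α ⟨i.val, h⟩).val := gf_left n p hp α β i h

lemma glue_val_mid (i : Fin n) (h : i.val = p) :
    ((glue n p hp α β) i).val = n-1 := gf_mid n p hp α β i h

lemma glue_val_right (i : Fin n) (h : p < i.val) :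
    ((glue n p hp α β) i).val = (β ⟨i.val - (p+1), by have := i.isLt; omega⟩).val :=
  gf_right n p hp α β i h


lemma glue_bounds_left (i : Fin n) (h : i.val < p) :
    (n-1-p) ≤ ((glue n p hp α β) i).val ∧ ((glue n p hp α β) i).val < n-1 := by
  have e := glue_val_left n p hp α β i h
  have hb := (α ⟨i.val, h⟩).isLt
  omega

lemma glue_bounds_right (i : Fin n) (h : p < i.val) :
    ((glue n p hp α β) i).val < n-1-p := by
  have e := glue_val_right n p hp α β i h
  have hb := (β ⟨i.val - (p+1), by have := i.isLt; omega⟩).isLt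
  omega

lemma glue_lt_left (x y : Fin n) (hx : x.val < p) (hy : y.val < p) :
    ((glue n p hp α β) x < (glue n p hp α β) y ↔ α ⟨x.val, hx⟩ < α ⟨y.val, hy⟩) := by
  rw [Fin.lt_def, Fin.lt_def, glue_val_left n p hp α β x hx, glue_val_left n p hp α β y hy]
  omega

lemma glue_lt_right (x y : Fin n) (hx : p < x.val) (hy : p < y.val) :
    ((glue n p hp α β) x < (glue n p hp α β) y ↔
      β ⟨x.val - (p+1), by have := x.isLt; omega⟩ < β ⟨y.val - (p+1), by have := y.isLt; omega⟩) := by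
  rw [Fin.lt_def, Fin.lt_def, glue_val_right n p hp α β x hx, glue_val_right n p hp α β y hy]


lemma avoids_glue_iff :
    Avoids132 n (glue n p hp α β) ↔ Avoids132 p α ∧ Avoids132 (n-1-p) β := by
  constructor
  · intro H
    constructor
    · intro i j k hij hjk ⟨h1, h2⟩
      refine H ⟨i.val, by omega⟩ ⟨j.val, by omega⟩ ⟨k.val, by omega⟩
        (Fin.mk_lt_mk.mpr hij) (Fin.mk_lt_mk.mpr hjk) ⟨?_, ?_⟩
      · exact (glue_lt_left n p hp α β _ _ i.isLt k.isLt).mpr h1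
      · exact (glue_lt_left n p hp α β _ _ k.isLt j.isLt).mpr h2
    · intro i j k hij hjk ⟨h1, h2⟩
      have hm : ∀ y : Fin (n-1-p), p + 1 + y.val < n := by intro y; have := y.isLt; omega
      have he : ∀ (y : Fin (n-1-p)) (hh : p < ((⟨p+1+y.val, hm y⟩ : Fin n)).val),
          (⟨(⟨p+1+y.val, hm y⟩ : Fin n).val - (p+1), by have := y.isLt; omega⟩ : Fin (n-1-p)) = y :=
        fun y hh => Fin.ext (by simp)
      refine H ⟨p+1+i.val, hm i⟩ ⟨p+1+j.val, hm j⟩ ⟨p+1+k.val, hm k⟩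
        (Fin.mk_lt_mk.mpr (by have := Fin.lt_def.mp hij; omega))
        (Fin.mk_lt_mk.mpr (by have := Fin.lt_def.mp hjk; omega)) ⟨?_, ?_⟩
      · rw [glue_lt_right n p hp α β _ _ (by simp; omega) (by simp; omega), he i (by simp; omega), he k (by simp; omega)]
        exact h1
      · rw [glue_lt_right n p hp α β _ _ (by simp; omega) (by simp; omega), he k (by simp; omega), he j (by simp; omega)]
        exact h2
  · rintro ⟨Hα, Hβ⟩ i j k hij hjk ⟨h1, h2⟩
    have hij' := Fin.lt_def.mp hij
    have hjk' := Fin.lt_def.mp hjk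
    have h1' := Fin.lt_def.mp h1
    have h2' := Fin.lt_def.mp h2
    have hk' := k.isLt
    by_cases hkp : k.val < p
    · have hip : i.val < p := by omega
      have hjp : j.val < p := by omega
      exact Hα ⟨i.val, hip⟩ ⟨j.val, hjp⟩ ⟨k.val, hkp⟩ (Fin.mk_lt_mk.mpr hij')
        (Fin.mk_lt_mk.mpr hjk')
        ⟨(glue_lt_left n p hp α β i k hip hkp).mp h1,
         (glue_lt_left n p hp α β k j hkp hjp).mp h2⟩
    · by_cases hjp : p < j.val
      · by_cases hip : p < i.val
        · exact Hβ ⟨i.val - (p+1), by omega⟩ ⟨j.val - (p+1), by omega⟩ ⟨k.val - (p+1), by omega⟩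
            (Fin.mk_lt_mk.mpr (by omega)) (Fin.mk_lt_mk.mpr (by omega))
            ⟨(glue_lt_right n p hp α β i k hip (by omega)).mp h1,
             (glue_lt_right n p hp α β k j (by omega) hjp).mp h2⟩
        · -- i ≤ p, k > p : glue i ≥ q > glue k or glue i = n-1 > glue k
          have ek := glue_bounds_right n p hp α β k (by omega)
          by_cases hip2 : i.val < p
          · have ei := (glue_bounds_left n p hp α β i hip2).1
            omega
          · have ei := glue_val_mid n p hp α β i (by omega)
            omega
      · by_cases hjp2 : j.val = p
        · have hip : i.val < p := by omega
          have ei := (glue_bounds_left n p hp α β i hip).1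
          have ek := glue_bounds_right n p hp α β k (by omega)
          omega
        · have hip : i.val < p := by omega
          have hjp3 : j.val < p := by omega
          have ej := (glue_bounds_left n p hp α β j hjp3).2
          by_cases hkp2 : k.val = p
          · have ek := glue_val_mid n p hp α β k hkp2
            omega
          · have ei := (glue_bounds_left n p hp α β i hip).1
            have ek := glue_bounds_right n p hp α β k (by omega)
            omega


lemma ncard_val_lt (m : ℕ) (hm : m ≤ n) : ({y : Fin n | y.val < m}).ncard = m := by
  have : {y : Fin n | y.val < m} = (fun x : Fin m => (⟨x.val, by omega⟩ : Fin n)) '' Set.univ := by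
    ext y
    simp only [Set.mem_setOf_eq, Set.image_univ, Set.mem_range]
    constructor
    · intro hy; exact ⟨⟨y.val, hy⟩, Fin.ext rfl⟩
    · rintro ⟨x, rfl⟩; exact x.isLt
  rw [this, Set.ncard_image_of_injective _
    (fun a b hab => Fin.ext (by simpa using congrArg Fin.val hab)),
    Set.ncard_univ, Nat.card_eq_fintype_card, Fintype.card_fin]

lemma perm_lt_congr {m : ℕ} (e : Equiv.Perm (Fin m)) {a b c d : Fin m}
    (ha : a.val = c.val) (hb : b.val = d.val) : (e a < e b) ↔ (e c < e d) := by
  rw [Fin.ext ha, Fin.ext hb]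

lemma lcnt_glue_left (x : Fin n) (i : Fin p) (hx : x.val = i.val) :
    lcnt (glue n p hp α β) x = lcnt α i := by
  rw [lcnt, lcnt, Nat.card_coe_set_eq, Nat.card_coe_set_eq]
  have hI : x.val < p := by have := i.isLt; omega
  have hset : {y : Fin n | y < x ∧ (glue n p hp α β) x < (glue n p hp α β) y}
      = (fun y : Fin p => (⟨y.val, by omega⟩ : Fin n)) '' {y : Fin p | y < i ∧ α i < α y} := by
    ext y
    simp only [Set.mem_setOf_eq, Set.mem_image]
    constructor
    · rintro ⟨hy1, hy2⟩
      have hyv : y.val < p := by have := Fin.lt_def.mp hy1; omega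
      refine ⟨⟨y.val, hyv⟩, ⟨?_, ?_⟩, Fin.ext rfl⟩
      · exact Fin.lt_def.mpr (show y.val < i.val by have := Fin.lt_def.mp hy1; omega)
      · exact (perm_lt_congr α hx rfl).mp ((glue_lt_left n p hp α β x y hI hyv).mp hy2)
    · rintro ⟨z, ⟨hz1, hz2⟩, rfl⟩
      have hzv : ((⟨z.val, by omega⟩ : Fin n)).val < p := z.isLt
      refine ⟨Fin.lt_def.mpr (show z.val < x.val by have := Fin.lt_def.mp hz1; omega), ?_⟩
      exact (glue_lt_left n p hp α β x _ hI hzv).mpr ((perm_lt_congr α hx.symm rfl).mp hz2)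
  rw [hset, Set.ncard_image_of_injective _
    (fun a b hab => Fin.ext (by simpa using congrArg Fin.val hab))]

lemma lcnt_glue_mid (x : Fin n) (hx : x.val = p) : lcnt (glue n p hp α β) x = 0 := by
  rw [lcnt]
  have hset : {y : Fin n | y < x ∧ (glue n p hp α β) x < (glue n p hp α β) y} = ∅ := by
    ext y
    simp only [Set.mem_setOf_eq, Set.mem_empty_iff_false, iff_false, not_and]
    intro hy1 hy2
    have hyv : y.val < p := by have := Fin.lt_def.mp hy1; omega
    have e1 := glue_val_mid n p hp α β x hx
    have e2 := (glue_bounds_left n p hp α β y hyv).2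
    have := Fin.lt_def.mp hy2
    omega
  rw [hset]
  simp

lemma lcnt_glue_right (x : Fin n) (j : Fin (n-1-p)) (hx : x.val = p+1+j.val) :
    lcnt (glue n p hp α β) x = p + 1 + lcnt β j := by
  rw [lcnt, lcnt, Nat.card_coe_set_eq, Nat.card_coe_set_eq]
  have hq := j.isLt
  have hJ : p < x.val := by omega
  have hbj := (β j).isLt
  have ej : ((glue n p hp α β) x).val = (β j).val := by
    rw [glue_val_right n p hp α β x hJ]
    exact congrArg (fun z => (β z).val) (Fin.ext (show x.val - (p+1) = j.val by omega))
  have hset : {y : Fin n | y < x ∧ (glue n p hp α β) x < (glue n p hp α β) y}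
      = {y : Fin n | y.val < p+1} ∪
        ((fun y : Fin (n-1-p) => (⟨p+1+y.val, by have := y.isLt; omega⟩ : Fin n)) ''
          {y : Fin (n-1-p) | y < j ∧ β j < β y}) := by
    ext y
    simp only [Set.mem_setOf_eq, Set.mem_union, Set.mem_image]
    constructor
    · rintro ⟨hy1, hy2⟩
      by_cases hyv : y.val < p + 1
      · exact Or.inl hyv
      · have hyp : p < y.val := by omega
        refine Or.inr ⟨⟨y.val - (p+1), by have := y.isLt; omega⟩, ⟨?_, ?_⟩,
          Fin.ext (show p+1+(y.val - (p+1)) = y.val by omega)⟩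
        · refine Fin.lt_def.mpr ?_
          show y.val - (p+1) < j.val
          have := Fin.lt_def.mp hy1
          omega
        · exact (perm_lt_congr β (show x.val - (p+1) = j.val by omega) rfl).mp
            ((glue_lt_right n p hp α β x y hJ hyp).mp hy2)
    · rintro (hy | ⟨z, ⟨hz1, hz2⟩, rfl⟩)
      · constructor
        · exact Fin.lt_def.mpr (by omega)
        · refine Fin.lt_def.mpr ?_
          rw [ej]
          by_cases hyv : y.val < p
          · have := (glue_bounds_left n p hp α β y hyv).1
            omega
          · have e := glue_val_mid n p hp α β y (by omega)
            omega
      · have hzv : p < ((⟨p+1+z.val, by have := z.isLt; omega⟩ : Fin n)).val := by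
          show p < p+1+z.val
          omega
        constructor
        · exact Fin.lt_def.mpr (by show p+1+z.val < x.val; have := Fin.lt_def.mp hz1; omega)
        · exact (glue_lt_right n p hp α β x _ hJ hzv).mpr
            ((perm_lt_congr β (show x.val - (p+1) = j.val by omega)
              (show p+1+z.val - (p+1) = z.val by omega)).mpr hz2)
  have hinj : Function.Injective
      (fun y : Fin (n-1-p) => (⟨p+1+y.val, by have := y.isLt; omega⟩ : Fin n)) := by
    intro a b hab
    have : p+1+a.val = p+1+b.val := congrArg Fin.val hab
    exact Fin.ext (by omega)
  have hdisj : Disjoint {y : Fin n | y.val < p+1}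
      ((fun y : Fin (n-1-p) => (⟨p+1+y.val, by have := y.isLt; omega⟩ : Fin n)) ''
        {y : Fin (n-1-p) | y < j ∧ β j < β y}) := by
    rw [Set.disjoint_left]
    rintro y hy ⟨z, _, rfl⟩
    simp only [Set.mem_setOf_eq] at hy
    have : p+1+z.val < p+1 := hy
    omega
  have hcu := Set.ncard_union_eq hdisj (Set.toFinite _) (Set.toFinite _)
  rw [hset, hcu, ncard_val_lt n (p+1) (by omega), Set.ncard_image_of_injective _ hinj]

lemma forall_lcnt_glue_iff (k : ℕ) :
    (∀ x, lcnt (glue n p hp α β) x < k) ↔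
      ((∀ i, lcnt α i < k) ∧ 1 ≤ k ∧ (∀ j, lcnt β j < k - (p+1))) := by
  constructor
  · intro H
    refine ⟨fun i => ?_, ?_, fun j => ?_⟩
    · have h := H ⟨i.val, by have := i.isLt; omega⟩
      rwa [lcnt_glue_left n p hp α β _ i rfl] at h
    · have h := H ⟨p, hp⟩
      rwa [lcnt_glue_mid n p hp α β _ rfl] at h
    · have h := H ⟨p+1+j.val, by have := j.isLt; omega⟩
      rw [lcnt_glue_right n p hp α β _ j rfl] at h
      omega
  · rintro ⟨Hα, Hk, Hβ⟩ x
    have hx := x.isLt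
    by_cases h : x.val < p
    · rw [lcnt_glue_left n p hp α β x ⟨x.val, h⟩ rfl]
      exact Hα ⟨x.val, h⟩
    · by_cases h2 : x.val = p
      · rw [lcnt_glue_mid n p hp α β x h2]
        omega
      · rw [lcnt_glue_right n p hp α β x ⟨x.val - (p+1), by omega⟩
          (show x.val = p+1+(x.val - (p+1)) by omega)]
        have := Hβ ⟨x.val - (p+1), by omega⟩
        omega

lemma glue_val_left2 (x : Fin n) (i : Fin p) (hx : x.val = i.val) :
    ((glue n p hp α β) x).val = (n-1-p) + (α i).val := by
  have h : x.val < p := by have := i.isLt; omega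
  rw [glue_val_left n p hp α β x h]
  exact congrArg (fun z => (n-1-p) + (α z).val) (Fin.ext hx)

lemma glue_val_right2 (x : Fin n) (j : Fin (n-1-p)) (hx : x.val = p+1+j.val) :
    ((glue n p hp α β) x).val = (β j).val := by
  have h : p < x.val := by omega
  rw [glue_val_right n p hp α β x h]
  exact congrArg (fun z => (β z).val) (Fin.ext (show x.val - (p+1) = j.val by omega))

end glue

lemma ncard_val_gt (n v : ℕ) : ({y : Fin n | v < y.val}).ncard = n - (v+1) := by
  rcases le_or_gt n (v+1) with h | h
  · have : {y : Fin n | v < y.val} = ∅ := by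
      ext y
      simp only [Set.mem_setOf_eq, Set.mem_empty_iff_false, iff_false, not_lt]
      have := y.isLt
      omega
    rw [this]
    simp
    omega
  · have : {y : Fin n | v < y.val}
        = (fun x : Fin (n-(v+1)) => (⟨v+1+x.val, by have := x.isLt; omega⟩ : Fin n)) ''
          Set.univ := by
      ext y
      simp only [Set.mem_setOf_eq, Set.image_univ, Set.mem_range]
      constructor
      · intro hy
        exact ⟨⟨y.val - (v+1), by have := y.isLt; omega⟩,
          Fin.ext (show v+1+(y.val - (v+1)) = y.val by omega)⟩
      · rintro ⟨x, rfl⟩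
        show v < v+1+x.val
        omega
    rw [this, Set.ncard_image_of_injective _ (fun a b hab => Fin.ext (by
        have : v+1+a.val = v+1+b.val := congrArg Fin.val hab
        omega)),
      Set.ncard_univ, Nat.card_eq_fintype_card, Fintype.card_fin]

section region

variable {n : ℕ} (σ : Equiv.Perm (Fin n)) (P : Fin n)

/-- every position strictly right of `P` carries a value `< n-1-P`. -/
lemma region_right (hA : Avoids132 n σ) (hP : (σ P).val = n-1)
    (x : Fin n) (hx : P.val < x.val) : (σ x).val < n-1-P.val := by
  by_contra hv
  push_neg at hv
  have hxP : x ≠ P := fun h => by rw [h] at hx; omega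
  have hn1 : (σ x).val < n-1 := by
    have h1 := (σ x).isLt
    have h2 : σ x ≠ σ P := fun h => hxP (σ.injective h)
    have h3 : (σ x).val ≠ (σ P).val := fun h => h2 (Fin.ext h)
    omega
  have claim : ∀ i : Fin n, i.val ≤ P.val → (σ x).val < (σ i).val := by
    intro i hi
    rcases eq_or_lt_of_le hi with he | hlt
    · have : i = P := Fin.ext he
      rw [this, hP]
      omega
    · have hiP : i < P := Fin.lt_def.mpr hlt
      have hPx : P < x := Fin.lt_def.mpr hx
      have h4 := hA i P x hiP hPx
      have h5 : σ x < σ P := Fin.lt_def.mpr (by rw [hP]; omega)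
      have h6 : ¬ (σ i < σ x) := fun hc => h4 ⟨hc, h5⟩
      have h7 : σ i ≠ σ x := fun h => (by
        have : i = x := σ.injective h
        rw [this] at hlt
        omega)
      have h8 : ¬ ((σ i).val < (σ x).val) := fun hc => h6 (Fin.lt_def.mpr hc)
      have h9 : (σ i).val ≠ (σ x).val := fun h => h7 (Fin.ext h)
      omega
  -- pigeonhole: the P.val+1 positions ≤ P.val inject into values > σ x
  have hsub : (fun i : Fin (P.val+1) => σ ⟨i.val, by have := i.isLt; have := P.isLt; omega⟩) ''
      Set.univ ⊆ {y : Fin n | (σ x).val < y.val} := by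
    rintro y ⟨i, _, rfl⟩
    exact claim _ (show i.val ≤ P.val by have := i.isLt; omega)
  have hinj : Function.Injective
      (fun i : Fin (P.val+1) => σ ⟨i.val, by have := i.isLt; have := P.isLt; omega⟩) := by
    intro a b hab
    have h1 := σ.injective hab
    have h2 := congrArg Fin.val h1
    exact Fin.ext h2
  have hcard := Set.ncard_le_ncard hsub (Set.toFinite _)
  rw [Set.ncard_image_of_injective _ hinj, Set.ncard_univ, Nat.card_eq_fintype_card,
    Fintype.card_fin, ncard_val_gt] at hcard
  have := P.isLt
  omega

/-- every position strictly left of `P` carries a value in `[n-1-P, n-1)`. -/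
lemma region_left (hA : Avoids132 n σ) (hP : (σ P).val = n-1)
    (x : Fin n) (hx : x.val < P.val) :
    n-1-P.val ≤ (σ x).val ∧ (σ x).val < n-1 := by
  have hxP : x ≠ P := fun h => by rw [h] at hx; omega
  have hn1 : (σ x).val < n-1 := by
    have h1 := (σ x).isLt
    have h2 : σ x ≠ σ P := fun h => hxP (σ.injective h)
    have h3 : (σ x).val ≠ (σ P).val := fun h => h2 (Fin.ext h)
    omega
  refine ⟨?_, hn1⟩
  by_contra hv
  push_neg at hv
  have hq : n-1-P.val ≥ 1 := by omega
  have hnP := P.isLt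
  -- map Fin (n-1-P.val + 1) into values < n-1-P.val : right positions plus x
  set q := n-1-P.val with hqdef
  have hg : ∀ z : Fin (q+1), z.val < q → P.val+1+z.val < n := by
    intro z hz
    omega
  set g : Fin (q+1) → Fin n := fun z =>
    if hz : z.val < q then ⟨P.val+1+z.val, hg z hz⟩ else x with hgdef
  have hsub : (fun z => σ (g z)) '' Set.univ ⊆ {y : Fin n | y.val < q} := by
    rintro y ⟨z, _, rfl⟩
    show (σ (g z)).val < q
    by_cases hz : z.val < q
    · have hgz : g z = ⟨P.val+1+z.val, hg z hz⟩ := dif_pos hz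
      rw [hgz]
      exact region_right σ P hA hP _ (by show P.val < P.val+1+z.val; omega)
    · have hgz : g z = x := dif_neg hz
      rw [hgz]
      exact hv
  have hginj : Function.Injective g := by
    intro a b hab
    by_cases ha : a.val < q <;> by_cases hb : b.val < q
    · rw [hgdef] at hab
      simp only [dif_pos ha, dif_pos hb] at hab
      have : P.val+1+a.val = P.val+1+b.val := congrArg Fin.val hab
      exact Fin.ext (by omega)
    · rw [hgdef] at hab
      simp only [dif_pos ha, dif_neg hb] at hab
      have : P.val+1+a.val = x.val := congrArg Fin.val hab
      omega
    · rw [hgdef] at hab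
      simp only [dif_neg ha, dif_pos hb] at hab
      have : x.val = P.val+1+b.val := congrArg Fin.val hab
      omega
    · have := a.isLt
      have := b.isLt
      exact Fin.ext (by omega)
  have hinj : Function.Injective (fun z => σ (g z)) := fun a b hab => hginj (σ.injective hab)
  have hcard := Set.ncard_le_ncard hsub (Set.toFinite _)
  rw [Set.ncard_image_of_injective _ hinj, Set.ncard_univ, Nat.card_eq_fintype_card,
    Fintype.card_fin, ncard_val_lt n q (by omega)] at hcard
  omega

end region

section unglue

variable {n : ℕ} (σ : Equiv.Perm (Fin n)) (P : Fin n)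

def ungA (hA : Avoids132 n σ) (hP : (σ P).val = n-1) : Equiv.Perm (Fin P.val) where
  toFun i := ⟨(σ ⟨i.val, by have := i.isLt; have := P.isLt; omega⟩).val - (n-1-P.val), by
    have hr := region_left σ P hA hP ⟨i.val, by have := i.isLt; have := P.isLt; omega⟩
      (show i.val < P.val from i.isLt)
    have := P.isLt
    omega⟩
  invFun v := ⟨(σ.symm ⟨v.val + (n-1-P.val), by have := v.isLt; have := P.isLt; omega⟩).val, by
    set w : Fin n := ⟨v.val + (n-1-P.val), by have := v.isLt; have := P.isLt; omega⟩ with hw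
    have hy : (σ (σ.symm w)).val = v.val + (n-1-P.val) :=
      congrArg Fin.val (σ.apply_symm_apply w)
    have hv := v.isLt
    have hnP := P.isLt
    by_contra hc
    push_neg at hc
    rcases eq_or_lt_of_le hc with he | hlt
    · have : σ.symm w = P := Fin.ext he.symm
      rw [this] at hy
      omega
    · have := region_right σ P hA hP (σ.symm w) hlt
      omega⟩
  left_inv := by
    intro i
    apply Fin.ext
    have hi := i.isLt
    have hnP := P.isLt
    have hr := region_left σ P hA hP ⟨i.val, by omega⟩ (show i.val < P.val from i.isLt)
    have key : ∀ z : Fin n, z.val = (σ ⟨i.val, by omega⟩).val → (σ.symm z).val = i.val := by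
      intro z hz
      rw [Fin.ext hz, Equiv.symm_apply_apply]
    exact key _ (by
      show (σ ⟨i.val, by omega⟩).val - (n-1-P.val) + (n-1-P.val) = _
      omega)
  right_inv := by
    intro v
    apply Fin.ext
    have hv := v.isLt
    have hnP := P.isLt
    set w : Fin n := ⟨v.val + (n-1-P.val), by omega⟩ with hw
    have hy : (σ (σ.symm w)).val = v.val + (n-1-P.val) :=
      congrArg Fin.val (σ.apply_symm_apply w)
    have key : ∀ z : Fin n, z.val = (σ.symm w).val → (σ z).val - (n-1-P.val) = v.val := by
      intro z hz
      rw [Fin.ext hz]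
      omega
    exact key _ rfl

def ungB (hA : Avoids132 n σ) (hP : (σ P).val = n-1) : Equiv.Perm (Fin (n-1-P.val)) where
  toFun j := ⟨(σ ⟨P.val+1+j.val, by have := j.isLt; omega⟩).val, by
    exact region_right σ P hA hP _ (show P.val < P.val+1+j.val by omega)⟩
  invFun v := ⟨(σ.symm ⟨v.val, by have := v.isLt; have := P.isLt; omega⟩).val - (P.val+1), by
    set w : Fin n := ⟨v.val, by have := v.isLt; have := P.isLt; omega⟩ with hw
    have hy : (σ (σ.symm w)).val = v.val := congrArg Fin.val (σ.apply_symm_apply w)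
    have hv := v.isLt
    have hnP := P.isLt
    have hyn := (σ.symm w).isLt
    have hp1 : P.val < (σ.symm w).val := by
      by_contra hc
      push_neg at hc
      rcases eq_or_lt_of_le hc with he | hlt
      · have : σ.symm w = P := Fin.ext he
        rw [this] at hy
        omega
      · have := (region_left σ P hA hP (σ.symm w) hlt).1
        omega
    omega⟩
  left_inv := by
    intro j
    apply Fin.ext
    have hj := j.isLt
    have hnP := P.isLt
    have key : ∀ z : Fin n, z.val = (σ ⟨P.val+1+j.val, by omega⟩).val →
        (σ.symm z).val - (P.val+1) = j.val := by
      intro z hz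
      rw [Fin.ext hz, Equiv.symm_apply_apply]
      show P.val+1+j.val - (P.val+1) = j.val
      omega
    exact key _ rfl
  right_inv := by
    intro v
    apply Fin.ext
    have hv := v.isLt
    have hnP := P.isLt
    set w : Fin n := ⟨v.val, by omega⟩ with hw
    have hy : (σ (σ.symm w)).val = v.val := congrArg Fin.val (σ.apply_symm_apply w)
    have key : ∀ z : Fin n, z.val = (σ.symm w).val → (σ z).val = v.val := by
      intro z hz
      rw [Fin.ext hz]
      exact hy
    exact key _ (by
      show P.val+1+((σ.symm w).val - (P.val+1)) = (σ.symm w).val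
      have hyn := (σ.symm w).isLt
      have hp1 : P.val < (σ.symm w).val := by
        by_contra hc
        push_neg at hc
        rcases eq_or_lt_of_le hc with he | hlt
        · have : σ.symm w = P := Fin.ext he
          rw [this] at hy
          omega
        · have := (region_left σ P hA hP (σ.symm w) hlt).1
          omega
      omega)

lemma sigma_eq_glue (hA : Avoids132 n σ) (hP : (σ P).val = n-1) :
    σ = glue n P.val P.isLt (ungA σ P hA hP) (ungB σ P hA hP) := by
  apply Equiv.ext
  intro x
  apply Fin.ext
  have hx := x.isLt
  have hnP := P.isLt
  by_cases h : x.val < P.val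
  · rw [glue_val_left n P.val P.isLt _ _ x h]
    have e1 : ((ungA σ P hA hP) ⟨x.val, h⟩).val
        = (σ ⟨x.val, by omega⟩).val - (n-1-P.val) := rfl
    have e2 : (σ ⟨x.val, by omega⟩ : Fin n) = σ x := by
      congr 1
    have hr := region_left σ P hA hP x h
    have key : ∀ z : Fin n, z.val = x.val → (σ z).val = (σ x).val :=
      fun z hz => congrArg Fin.val (congrArg σ (Fin.ext hz))
    have e3 := key (⟨x.val, by omega⟩ : Fin n) rfl
    omega
  · by_cases h2 : x.val = P.val
    · rw [glue_val_mid n P.val P.isLt _ _ x h2]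
      have : x = P := Fin.ext h2
      rw [this, hP]
    · have hxp : P.val < x.val := by omega
      rw [glue_val_right n P.val P.isLt _ _ x hxp]
      have e1 : ((ungB σ P hA hP) ⟨x.val - (P.val+1), by omega⟩).val
          = (σ ⟨P.val+1+(x.val - (P.val+1)), by omega⟩).val := rfl
      have key : ∀ z : Fin n, z.val = x.val → (σ z).val = (σ x).val :=
        fun z hz => congrArg Fin.val (congrArg σ (Fin.ext hz))
      have e3 := key (⟨P.val+1+(x.val - (P.val+1)), by omega⟩ : Fin n)
        (show P.val+1+(x.val - (P.val+1)) = x.val by omega)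
      omega

end unglue

lemma nat_card_sigma {ι : Type*} [Fintype ι] (f : ι → Type*) [∀ i, Finite (f i)] :
    Nat.card (Σ i, f i) = ∑ i, Nat.card (f i) := by
  letI : ∀ i, Fintype (f i) := fun i => Fintype.ofFinite _
  simp [Nat.card_eq_fintype_card, Fintype.card_sigma]

lemma card_partition (n k : ℕ) (hn : 1 ≤ n) :
    bb n k = ∑ P : Fin n, Nat.card {σ : Equiv.Perm (Fin n) //
      (Avoids132 n σ ∧ ∀ i, lcnt σ i < k) ∧ (σ P).val = n-1} := by
  rw [bb, ← nat_card_sigma]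
  apply Nat.card_eq_of_bijective
    (fun x : {σ : Equiv.Perm (Fin n) // σ ∈ {σ : Equiv.Perm (Fin n) |
        Avoids132 n σ ∧ ∀ i, lcnt σ i < k}} =>
      (⟨x.val.symm ⟨n-1, by omega⟩, ⟨x.val, x.prop,
        congrArg Fin.val (x.val.apply_symm_apply ⟨n-1, by omega⟩)⟩⟩ :
        Σ P : Fin n, {σ : Equiv.Perm (Fin n) //
          (Avoids132 n σ ∧ ∀ i, lcnt σ i < k) ∧ (σ P).val = n-1}))
  rw [Function.bijective_iff_has_inverse]
  refine ⟨fun x => ⟨x.2.val, x.2.prop.1⟩, fun x => ?_, fun x => ?_⟩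
  · exact Subtype.ext rfl
  · obtain ⟨P, σ, hσ, hP⟩ := x
    have h1 : σ.symm ⟨n-1, by omega⟩ = P := by
      have : σ P = ⟨n-1, by omega⟩ := Fin.ext hP
      rw [← this, Equiv.symm_apply_apply]
    have key : ∀ (P1 P2 : Fin n)
        (s1 : {σ : Equiv.Perm (Fin n) //
          (Avoids132 n σ ∧ ∀ i, lcnt σ i < k) ∧ (σ P1).val = n-1})
        (s2 : {σ : Equiv.Perm (Fin n) //
          (Avoids132 n σ ∧ ∀ i, lcnt σ i < k) ∧ (σ P2).val = n-1}),
        P1 = P2 → s1.val = s2.val →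
        (⟨P1, s1⟩ : Σ P : Fin n, {σ : Equiv.Perm (Fin n) //
          (Avoids132 n σ ∧ ∀ i, lcnt σ i < k) ∧ (σ P).val = n-1}) = ⟨P2, s2⟩ := by
      rintro P1 P2 s1 s2 rfl hs
      exact congrArg _ (Subtype.ext hs)
    exact key _ _ _ _ h1 rfl

lemma fiber_card (n k : ℕ) (hk : 1 ≤ k) (P : Fin n) :
    Nat.card {σ : Equiv.Perm (Fin n) //
        (Avoids132 n σ ∧ ∀ i, lcnt σ i < k) ∧ (σ P).val = n-1}
      = bb P.val k * bb (n-1-P.val) (k-(P.val+1)) := by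
  rw [bb, bb, ← Nat.card_prod]
  refine Eq.symm (Nat.card_eq_of_bijective
    (fun x : {α : Equiv.Perm (Fin P.val) // α ∈ {α : Equiv.Perm (Fin P.val) |
          Avoids132 P.val α ∧ ∀ i, lcnt α i < k}} ×
        {β : Equiv.Perm (Fin (n-1-P.val)) // β ∈ {β : Equiv.Perm (Fin (n-1-P.val)) |
          Avoids132 (n-1-P.val) β ∧ ∀ i, lcnt β i < k-(P.val+1)}} =>
      (⟨glue n P.val P.isLt x.1.val x.2.val,
        ⟨⟨(avoids_glue_iff n P.val P.isLt x.1.val x.2.val).mpr ⟨x.1.prop.1, x.2.prop.1⟩,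
          (forall_lcnt_glue_iff n P.val P.isLt x.1.val x.2.val k).mpr
            ⟨x.1.prop.2, hk, x.2.prop.2⟩⟩,
         glue_val_mid n P.val P.isLt x.1.val x.2.val P rfl⟩⟩ :
       {σ : Equiv.Perm (Fin n) //
        (Avoids132 n σ ∧ ∀ i, lcnt σ i < k) ∧ (σ P).val = n-1})) ?_)
  constructor
  · rintro ⟨⟨a1, ha1⟩, ⟨a2, ha2⟩⟩ ⟨⟨b1, hb1⟩, ⟨b2, hb2⟩⟩ h
    have hg : glue n P.val P.isLt a1 a2 = glue n P.val P.isLt b1 b2 :=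
      congrArg Subtype.val h
    have hv : ∀ x : Fin n, ((glue n P.val P.isLt a1 a2) x).val
        = ((glue n P.val P.isLt b1 b2) x).val := fun x => by rw [hg]
    have hnP := P.isLt
    have e1 : a1 = b1 := by
      apply Equiv.ext
      intro i
      apply Fin.ext
      have hi := i.isLt
      have h1 := hv ⟨i.val, by omega⟩
      rw [glue_val_left2 n P.val P.isLt a1 a2 _ i rfl,
        glue_val_left2 n P.val P.isLt b1 b2 _ i rfl] at h1
      omega
    have e2 : a2 = b2 := by
      apply Equiv.ext
      intro j
      apply Fin.ext
      have hj := j.isLt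
      have h1 := hv ⟨P.val+1+j.val, by omega⟩
      rw [glue_val_right2 n P.val P.isLt a1 a2 _ j rfl,
        glue_val_right2 n P.val P.isLt b1 b2 _ j rfl] at h1
      exact h1
    rw [Prod.ext_iff]
    exact ⟨Subtype.ext e1, Subtype.ext e2⟩
  · rintro ⟨σ, ⟨hA, hl⟩, hP⟩
    have hge := sigma_eq_glue σ P hA hP
    have hA' := hA
    have hl' := hl
    rw [hge] at hA' hl'
    obtain ⟨hAα, hAβ⟩ := (avoids_glue_iff n P.val P.isLt _ _).mp hA'
    obtain ⟨hlα, -, hlβ⟩ := (forall_lcnt_glue_iff n P.val P.isLt _ _ k).mp hl'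
    refine ⟨⟨⟨ungA σ P hA hP, ⟨hAα, hlα⟩⟩, ⟨ungB σ P hA hP, ⟨hAβ, hlβ⟩⟩⟩, ?_⟩
    exact Subtype.ext hge.symm

lemma bb_rec (n k : ℕ) (hn : 1 ≤ n) (hk : 1 ≤ k) :
    bb n k = ∑ p ∈ Finset.range n, bb p k * bb (n-1-p) (k-(p+1)) := by
  rw [card_partition n k hn]
  rw [← Fin.sum_univ_eq_sum_range (fun p => bb p k * bb (n-1-p) (k-(p+1))) n]
  exact Finset.sum_congr rfl (fun P _ => fiber_card n k hk P)

lemma bb_zero (k : ℕ) : bb 0 k = 1 := by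
  rw [bb, Nat.card_eq_one_iff_unique]
  constructor
  · constructor
    intro a b
    exact Subtype.ext (Equiv.ext (fun x => x.elim0))
  · exact ⟨⟨Equiv.refl _, fun i j k _ _ _ => i.elim0, fun i => i.elim0⟩⟩

lemma bb_k_zero (n : ℕ) (hn : 1 ≤ n) : bb n 0 = 0 := by
  rw [bb, Nat.card_eq_zero]
  left
  refine ⟨fun σ => ?_⟩
  have := σ.prop.2 ⟨0, by omega⟩
  omega

lemma bb_catalan (n : ℕ) : ∀ k, n ≤ k → bb n k = catalan n := by
  induction n using Nat.strong_induction_on with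
  | _ n ih =>
    intro k hnk
    match n with
    | 0 => rw [bb_zero, catalan_zero]
    | Nat.succ m =>
      rw [bb_rec (m+1) k (by omega) (by omega)]
      have hcat : catalan (m+1) = ∑ i ∈ Finset.range (m+1), catalan i * catalan (m-i) := by
        rw [catalan_succ]
        rw [← Fin.sum_univ_eq_sum_range (fun i => catalan i * catalan (m-i)) (m+1)]
      rw [hcat]
      apply Finset.sum_congr rfl
      intro p hp
      have hpm : p < m+1 := Finset.mem_range.mp hp
      have e1 : bb p k = catalan p := ih p (by omega) k (by omega)
      have e2 : m+1-1-p = m-p := by omega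
      have e3 : bb (m+1-1-p) (k-(p+1)) = catalan (m-p) := by
        rw [e2]
        exact ih (m-p) (by omega) (k-(p+1)) (by omega)
      rw [e1, e3]

lemma A_eq_bb (n k : ℕ) : A n k = bb n k := by
  rw [A, bb]
  have hset : {σ : Equiv.Perm (Fin n) | Avoids132 n σ ∧ mmp n 0 k 0 0 σ = 0}
      = {σ : Equiv.Perm (Fin n) | Avoids132 n σ ∧ ∀ i, lcnt σ i < k} := by
    ext σ
    simp only [Set.mem_setOf_eq]
    refine and_congr_right (fun _ => ?_)
    rw [mmp]
    have hs2 : {i : Fin n |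
        0 ≤ Nat.card {j : Fin n | i < j ∧ σ i < σ j} ∧
        k ≤ Nat.card {j : Fin n | j < i ∧ σ i < σ j} ∧
        0 ≤ Nat.card {j : Fin n | j < i ∧ σ j < σ i} ∧
        0 ≤ Nat.card {j : Fin n | i < j ∧ σ j < σ i}}
        = {i : Fin n | k ≤ lcnt σ i} := by
      ext i
      simp [lcnt]
    rw [hs2, Nat.card_coe_set_eq, Set.ncard_eq_zero (Set.toFinite _),
      Set.eq_empty_iff_forall_notMem]
    constructor
    · intro h i
      have := h i
      simp only [Set.mem_setOf_eq] at this
      omega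
    · intro h i
      simp only [Set.mem_setOf_eq]
      have := h i
      omega
  exact congrArg (fun s : Set (Equiv.Perm (Fin n)) => Nat.card ↑s) hset

/-- For `n ≥ 2` and `1 ≤ k ≤ n`,
`A(n,k) = A(n-1,k) + ∑_{i=1}^{k-1} Cat(i-1) * A(n-i, k-i)`, where `Cat` is the
Catalan number. -/
theorem A_catalan_recurrence (n k : ℕ) (hn : 2 ≤ n) (hk : 1 ≤ k) (hkn : k ≤ n) :
    A n k = A (n - 1) k + ∑ i ∈ Finset.Icc 1 (k - 1), catalan (i - 1) * A (n - i) (k - i) := by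
  obtain ⟨m, rfl⟩ : ∃ m, n = m+1 := ⟨n-1, by omega⟩
  rw [A_eq_bb (m+1) k, bb_rec (m+1) k (by omega) hk, Finset.sum_range_succ]
  have hlast : bb (m+1-1-m) (k-(m+1)) = 1 := by
    have h0 : m+1-1-m = 0 := by omega
    rw [h0, bb_zero]
  rw [hlast, mul_one]
  have hA1 : A (m+1-1) k = bb m k := by
    have h1 : m+1-1 = m := by omega
    rw [h1, A_eq_bb m k]
  rw [hA1, add_comm]
  congr 1
  -- RHS: reindex Icc 1 (k-1) as range (k-1)
  have hIcc : Finset.Icc 1 (k-1) = Finset.Ico 1 k := by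
    rw [← Finset.Ico_add_one_right_eq_Icc]
    congr 1
    omega
  rw [hIcc, Finset.sum_Ico_eq_sum_range]
  have hk1 : k - 1 ≤ m := by omega
  rw [← Finset.sum_subset (Finset.range_subset_range.mpr hk1) (fun p hp hnp => ?_)]
  · apply Finset.sum_congr rfl
    intro p hp
    have hpk : p < k - 1 := Finset.mem_range.mp hp
    have e1 : bb p k = catalan p := bb_catalan p k (by omega)
    have e2 : m+1-1-p = m-p := by omega
    have e3 : 1+p-1 = p := by omega
    have e4 : m+1-(1+p) = m-p := by omega
    have e5 : k-(1+p) = k-(p+1) := by omega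
    have e6 : A (m-p) (k-(p+1)) = bb (m-p) (k-(p+1)) := A_eq_bb _ _
    rw [e1, e2, e3, e4, e5, e6]
  · have hpk : ¬ p < k - 1 := fun hc => hnp (Finset.mem_range.mpr hc)
    have hpm : p < m := Finset.mem_range.mp hp
    have e2 : m+1-1-p = m-p := by omega
    have e5 : k-(p+1) = 0 := by omega
    rw [e2, e5, bb_k_zero (m-p) (by omega), mul_zero]
end

section
/- Let n ≥ 1 and k ≥ 1, and let σ be a 132-avoiding permutation of {1,…,n}. Then mmp(0,k,0,0)(σ) = 0 if and only if the position of the value 1 in σ is at most k, i.e. σ_i = 1 for some i ≤ k. -/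
private lemma card_Iio_set (n : ℕ) (p : Fin n) :
    Nat.card {j : Fin n | j < p} = p := by
  rw [Nat.card_coe_set_eq, Set.ncard_eq_toFinset_card']
  simp only [Set.toFinset_setOf]
  have h : Finset.filter (fun x => x < p) Finset.univ = Finset.Iio p := by
    ext x; simp
  rw [h]; simp [Fin.card_Iio]

/-- For a 132-avoiding permutation `σ` of `{1,…,n}` and `k ≥ 1`, `mmp(0,k,0,0)(σ) = 0`
if and only if the value `1` (which is `0 : Fin n` in the 0-based encoding) occurs in
one of the first `k` positions of `σ`. -/
theorem mmp0k00_zero_iff_one_early (n k : ℕ) (hn : 1 ≤ n) (hk : 1 ≤ k)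
    (σ : Equiv.Perm (Fin n)) (hσ : Avoids132 n σ) :
    mmp n 0 k 0 0 σ = 0 ↔ ∃ i : Fin n, (i : ℕ) < k ∧ (σ i : ℕ) = 0 := by
  classical
  have hn0 : 0 < n := hn
  set z : Fin n := ⟨0, hn0⟩ with hz
  set p : Fin n := σ⁻¹ z with hp
  have hσp : σ p = z := Equiv.apply_symm_apply σ z
  have hzlt : ∀ j : Fin n, σ j ≠ z → z < σ j := by
    intro j hj
    have hv : (σ j : ℕ) ≠ 0 := fun h => hj (Fin.ext (by simpa using h))
    rw [Fin.lt_def]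
    exact Nat.pos_of_ne_zero hv
  -- count at p equals p
  have hCp : Nat.card {j : Fin n | j < p ∧ σ p < σ j} = (p : ℕ) := by
    have heq : {j : Fin n | j < p ∧ σ p < σ j} = {j : Fin n | j < p} := by
      ext j
      simp only [Set.mem_setOf_eq, and_iff_left_iff_imp]
      intro hj
      rw [hσp]
      apply hzlt
      intro h
      have : j = p := σ.injective (by rw [h, hσp])
      exact absurd this (ne_of_lt hj)
    rw [heq, card_Iio_set]
  -- count at i ≠ p is at most p
  have hCle : ∀ i : Fin n, i ≠ p →
      Nat.card {j : Fin n | j < i ∧ σ i < σ j} ≤ (p : ℕ) := by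
    intro i hi
    have hsub : {j : Fin n | j < i ∧ σ i < σ j} ⊆ {j : Fin n | j < p} := by
      rintro j ⟨hji, hσj⟩
      simp only [Set.mem_setOf_eq]
      by_contra hnp
      push_neg at hnp
      have hjp : j ≠ p := by
        intro h
        rw [h, hσp] at hσj
        exact absurd (hzlt i (fun hc => hi (σ.injective (by rw [hc, hσp]))))
          (not_lt_of_gt hσj)
      have hpj : p < j := lt_of_le_of_ne hnp (by exact fun h => hjp h.symm)
      have hσi : z < σ i := hzlt i (fun hc => hi (σ.injective (by rw [hc, hσp])))
      exact hσ p j i hpj hji ⟨hσp ▸ hσi, hσj⟩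
    calc Nat.card {j : Fin n | j < i ∧ σ i < σ j}
        ≤ Nat.card {j : Fin n | j < p} := Nat.card_mono (Set.toFinite _) hsub
      _ = (p : ℕ) := card_Iio_set n p
  -- simplify mmp
  have hmmp : mmp n 0 k 0 0 σ =
      Nat.card {i : Fin n | k ≤ Nat.card {j : Fin n | j < i ∧ σ i < σ j}} := by
    unfold mmp
    simp [Nat.zero_le]
  rw [hmmp]
  rw [Nat.card_coe_set_eq, Set.ncard_eq_zero (Set.toFinite _),
    Set.eq_empty_iff_forall_notMem]
  constructor
  · intro h
    have := h p
    simp only [Set.mem_setOf_eq, hCp, not_le] at this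
    exact ⟨p, this, by simp [hσp, hz]⟩
  · rintro ⟨i, hik, hσi⟩
    have hip : i = p := σ.injective (by rw [hσp]; exact Fin.ext (by simpa using hσi))
    rw [hip] at hik
    intro x hx
    simp only [Set.mem_setOf_eq] at hx
    by_cases hxi : x = p
    · rw [hxi, hCp] at hx; omega
    · have := hCle x hxi
      omega
end

section
/- For all integers n ≥ 1 and 0 ≤ k ≤ n−1, the number of 132-avoiding permutations σ of {1,…,n} with mmp(0,0,1,0)(σ) = k equals the Narayana number N(n,k+1) = (1/n)·binomial(n,k)·binomial(n,k+1). -/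
namespace MMP132

open Finset

variable {n : ℕ}

/-- number of elements of `X` with index value `< t`. -/
def cnt (X : Finset (Fin n)) (t : ℕ) : ℕ := (X.filter (fun i : Fin n => (i : ℕ) < t)).card

/-- `i` is not a left-to-right minimum of `σ`. -/
def IsNM (σ : Equiv.Perm (Fin n)) (i : Fin n) : Prop := ∃ j, j < i ∧ σ j < σ i

instance (σ : Equiv.Perm (Fin n)) : DecidablePred (IsNM σ) := fun i => by
  unfold IsNM; exact Fintype.decidableExistsFintype

/-- positions of non-left-to-right-minima. -/
def NMpos (σ : Equiv.Perm (Fin n)) : Finset (Fin n) := Finset.univ.filter (IsNM σ)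

/-- the code `x ↦ n - x` (fixing `0`). -/
def code (x : Fin n) : Fin n := ⟨(n - (x : ℕ)) % n, Nat.mod_lt _ x.pos⟩

/-- values of non-left-to-right-minima. -/
def NMval (σ : Equiv.Perm (Fin n)) : Finset (Fin n) := (NMpos σ).image σ

/-- the encoded first component. -/
def encA [NeZero n] (σ : Equiv.Perm (Fin n)) : Finset (Fin n) :=
  insert 0 ((NMval σ).image code)

/-- a "good" (dominating) pair of subsets. -/
def IsGood (A B : Finset (Fin n)) : Prop := ∀ t ∈ Finset.Icc 1 n, cnt B t < cnt A t

instance (A B : Finset (Fin n)) : Decidable (IsGood A B) := by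
  unfold IsGood; infer_instance

lemma isGood_iff {A B : Finset (Fin n)} :
    IsGood A B ↔ ∀ t, 0 < t → t ≤ n → cnt B t < cnt A t := by
  unfold IsGood
  constructor
  · intro h t h1 h2; exact h t (Finset.mem_Icc.2 ⟨h1, h2⟩)
  · intro h t ht; rw [Finset.mem_Icc] at ht; exact h t ht.1 ht.2

def GoodPairs (n k : ℕ) : Finset (Finset (Fin n) × Finset (Fin n)) :=
  Finset.univ.filter (fun p => p.1.card = k + 1 ∧ p.2.card = k ∧ IsGood p.1 p.2)

/-! ### basic facts about `code` -/

lemma code_zero {x : Fin n} (hx : (x : ℕ) = 0) : ((code x : Fin n) : ℕ) = 0 := by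
  simp [code, hx]

lemma code_of_ne {x : Fin n} (hx : (x : ℕ) ≠ 0) : ((code x : Fin n) : ℕ) = n - x := by
  have : n - (x : ℕ) < n := by omega
  simp [code, Nat.mod_eq_of_lt this]

lemma code_involutive : Function.Involutive (code : Fin n → Fin n) := by
  intro x
  rcases Nat.eq_zero_or_pos (x : ℕ) with h | h
  · apply Fin.ext; rw [code_zero (code_zero h), h]
  · have hx : (x : ℕ) ≠ 0 := by omega
    have h1 : ((code x : Fin n) : ℕ) = n - x := code_of_ne hx
    have hlt := x.isLt
    have h2 : ((code x : Fin n) : ℕ) ≠ 0 := by omega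
    apply Fin.ext; rw [code_of_ne h2, h1]; omega

lemma code_injective : Function.Injective (code : Fin n → Fin n) :=
  code_involutive.injective

/-! ### main structural lemmas -/

lemma zero_not_mem_NMval' (σ : Equiv.Perm (Fin n)) {x : Fin n} (hx : x ∈ NMval σ) :
    (x : ℕ) ≠ 0 := by
  rcases Finset.mem_image.1 hx with ⟨i, hi, rfl⟩
  rcases (Finset.mem_filter.1 hi).2 with ⟨j, _, hlt⟩
  have : (σ j : ℕ) < (σ i : ℕ) := hlt
  omega

lemma zero_not_mem_image_code [NeZero n] (σ : Equiv.Perm (Fin n)) :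
    (0 : Fin n) ∉ (NMval σ).image code := by
  intro h0
  rcases Finset.mem_image.1 h0 with ⟨x, hx, hcx⟩
  have h1 := code_of_ne (zero_not_mem_NMval' σ hx)
  have hxlt := x.isLt
  have h2 : ((code x : Fin n) : ℕ) = 0 := by rw [hcx]; rfl
  omega

lemma erase_encA [NeZero n] (σ : Equiv.Perm (Fin n)) :
    (encA σ).erase 0 = (NMval σ).image code := by
  rw [encA, Finset.erase_insert (zero_not_mem_image_code σ)]

lemma NMval_eq_image_code_erase [NeZero n] (σ : Equiv.Perm (Fin n)) :
    NMval σ = ((encA σ).erase 0).image code := by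
  rw [erase_encA, Finset.image_image]
  simp [code_involutive.comp_self]

theorem card_encA [NeZero n] (σ : Equiv.Perm (Fin n)) :
    (encA σ).card = (NMpos σ).card + 1 := by
  rw [encA, Finset.card_insert_of_notMem (zero_not_mem_image_code σ),
    Finset.card_image_of_injective _ code_injective, NMval,
    Finset.card_image_of_injective _ (Equiv.injective σ)]

lemma mem_NMpos_iff {σ : Equiv.Perm (Fin n)} {i : Fin n} :
    i ∈ NMpos σ ↔ ∃ j, j < i ∧ σ j < σ i := by
  simp [NMpos, IsNM]

lemma mem_NMval_iff {σ : Equiv.Perm (Fin n)} {x : Fin n} :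
    x ∈ NMval σ ↔ σ.symm x ∈ NMpos σ := by
  constructor
  · intro hx
    rcases Finset.mem_image.1 hx with ⟨i, hi, rfl⟩
    simpa using hi
  · intro h
    exact Finset.mem_image.2 ⟨σ.symm x, h, by simp⟩

/-! ### counting helpers -/

lemma card_filter_val_lt {t : ℕ} (h : t ≤ n) :
    (Finset.univ.filter (fun i : Fin n => (i : ℕ) < t)).card = t := by
  have key : (Finset.univ.filter (fun i : Fin n => (i : ℕ) < t)).card
      = (Finset.range t).card := by
    refine Finset.card_bij (fun i _ => (i : ℕ)) ?_ ?_ ?_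
    · intro a ha; rw [Finset.mem_filter] at ha; exact Finset.mem_range.2 ha.2
    · intro a _ b _ hab; exact Fin.ext hab
    · intro b hb
      have hbn : b < n := lt_of_lt_of_le (Finset.mem_range.1 hb) h
      exact ⟨⟨b, hbn⟩, Finset.mem_filter.2 ⟨Finset.mem_univ _, Finset.mem_range.1 hb⟩, rfl⟩
  rw [key, Finset.card_range]

lemma card_filter_val_gt {c : ℕ} (h : c < n) :
    (Finset.univ.filter (fun i : Fin n => c < (i : ℕ))).card = n - 1 - c := by
  have hnot : Finset.univ.filter (fun i : Fin n => c < (i : ℕ)) =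
      Finset.univ \ Finset.univ.filter (fun i : Fin n => (i : ℕ) < c + 1) := by
    rw [← Finset.filter_not]
    apply Finset.filter_congr
    intro i _
    simp only [not_lt]
    omega
  rw [hnot, Finset.card_sdiff_of_subset (Finset.filter_subset _ _),
    card_filter_val_lt (show c + 1 ≤ n by omega), Finset.card_univ, Fintype.card_fin]
  omega

lemma not_isNM_lt {σ : Equiv.Perm (Fin n)} {i : Fin n} (h : ¬ IsNM σ i) :
    ∀ j, j < i → σ i < σ j := by
  intro j hj
  rcases lt_trichotomy (σ i) (σ j) with h1 | h1 | h1
  · exact h1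
  · exact absurd (σ.injective h1.symm) (ne_of_lt hj)
  · exact absurd ⟨j, hj, h1⟩ h

lemma min_pos_bound {σ : Equiv.Perm (Fin n)} {i : Fin n} (h : ¬ IsNM σ i) :
    (i : ℕ) + (σ i : ℕ) ≤ n - 1 := by
  have h1 : (Finset.univ.filter (fun j : Fin n => (j : ℕ) < (i : ℕ))).card = (i : ℕ) :=
    card_filter_val_lt (le_of_lt i.isLt)
  have h2 : (Finset.univ.filter (fun v : Fin n => ((σ i : Fin n) : ℕ) < (v : ℕ))).card
      = n - 1 - (σ i : ℕ) := card_filter_val_gt (σ i).isLt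
  have hle : (Finset.univ.filter (fun j : Fin n => (j : ℕ) < (i : ℕ))).card ≤
      (Finset.univ.filter (fun v : Fin n => ((σ i : Fin n) : ℕ) < (v : ℕ))).card := by
    apply Finset.card_le_card_of_injOn σ
    · intro j hj
      rw [Finset.mem_coe, Finset.mem_filter] at hj ⊢
      refine ⟨Finset.mem_univ _, ?_⟩
      have : σ i < σ j := not_isNM_lt h j (by rw [Fin.lt_def]; exact hj.2)
      exact this
    · intro a _ b _ hab
      exact σ.injective hab
  have hsi := (σ i).isLt
  omega

lemma exists_min_le (σ : Equiv.Perm (Fin n)) (j : Fin n) :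
    ∃ i, i ≤ j ∧ ¬ IsNM σ i ∧ σ i ≤ σ j := by
  have key : ∀ m : ℕ, ∀ j : Fin n, (j : ℕ) < m → ∃ i, i ≤ j ∧ ¬ IsNM σ i ∧ σ i ≤ σ j := by
    intro m
    induction m with
    | zero => intro j hj; omega
    | succ m ih =>
      intro j hj
      by_cases hnm : IsNM σ j
      · rcases hnm with ⟨j', hj', hlt⟩
        have hj'm : (j' : ℕ) < m := by
          have := hj'
          rw [Fin.lt_def] at this
          omega
        rcases ih j' hj'm with ⟨i, hi1, hi2, hi3⟩
        exact ⟨i, le_trans hi1 (le_of_lt hj'), hi2, le_trans hi3 (le_of_lt hlt)⟩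
      · exact ⟨j, le_refl _, hnm, le_refl _⟩
  exact key ((j : ℕ) + 1) j (Nat.lt_succ_self _)

lemma image_not_NMpos (σ : Equiv.Perm (Fin n)) {v : Fin n} :
    v ∉ NMval σ ↔ ¬ IsNM σ (σ.symm v) := by
  rw [mem_NMval_iff]
  simp [NMpos]

/-! ### goodness of the encoding -/

theorem good_encA [NeZero n] (σ : Equiv.Perm (Fin n)) : IsGood (encA σ) (NMpos σ) := by
  classical
  rw [isGood_iff]
  intro t ht1 htn
  have hn0 : 0 < n := Nat.pos_of_ne_zero (NeZero.ne n)
  -- rewrite cnt of encA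
  have hA : cnt (encA σ) t
      = ((NMval σ).filter (fun x : Fin n => n - t < (x : ℕ))).card + 1 := by
    rw [encA, cnt, Finset.filter_insert, if_pos (show ((0 : Fin n) : ℕ) < t by
      simp only [Fin.val_zero]; omega)]
    rw [Finset.card_insert_of_notMem (by
      intro hmem
      exact zero_not_mem_image_code σ (Finset.mem_of_mem_filter _ hmem))]
    congr 1
    rw [Finset.filter_image, Finset.card_image_of_injective _ code_injective]
    congr 1
    apply Finset.filter_congr
    intro x hx
    have hcx := code_of_ne (zero_not_mem_NMval' σ hx)
    have := x.isLt
    rw [hcx]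
    constructor <;> (intro; omega)
  rw [hA, cnt]
  -- it suffices to show B_t.card ≤ C_t.card
  set Bt := (NMpos σ).filter (fun i : Fin n => (i : ℕ) < t) with hBt
  set Ct := (NMval σ).filter (fun x : Fin n => n - t < (x : ℕ)) with hCt
  suffices hmain : Bt.card ≤ Ct.card by omega
  -- partitions
  set Mins := Finset.univ.filter (fun i : Fin n => ¬ IsNM σ i) with hMins
  set St := Mins.filter (fun i : Fin n => (i : ℕ) < t) with hSt
  set St' := Mins.filter (fun i : Fin n => (i : ℕ) < t - 1) with hSt'
  have hpart1 : Bt.card + St.card = t := by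
    have h := Finset.card_filter_add_card_filter_not
      (s := Finset.univ.filter (fun i : Fin n => (i : ℕ) < t)) (p := IsNM σ)
    rw [card_filter_val_lt htn] at h
    have e1 : Bt = (Finset.univ.filter (fun i : Fin n => (i : ℕ) < t)).filter (IsNM σ) := by
      rw [hBt, NMpos, Finset.filter_comm]
    have e2 : St = (Finset.univ.filter (fun i : Fin n => (i : ℕ) < t)).filter
        (fun a => ¬ IsNM σ a) := by
      rw [hSt, hMins, Finset.filter_comm]
    rw [e1, e2, h]
  -- Ct and big minima values partition the top t-1 values
  set MVt := (Finset.univ.filter (fun x : Fin n => n - t < (x : ℕ))).filter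
      (fun x => x ∉ NMval σ) with hMVt
  have hpart2 : Ct.card + MVt.card = t - 1 := by
    have h := Finset.card_filter_add_card_filter_not
      (s := Finset.univ.filter (fun x : Fin n => n - t < (x : ℕ)))
      (p := fun x => x ∈ NMval σ)
    rw [card_filter_val_gt (show n - t < n by omega)] at h
    have e1 : Ct = (Finset.univ.filter (fun x : Fin n => n - t < (x : ℕ))).filter
        (fun x => x ∈ NMval σ) := by
      rw [hCt, Finset.filter_comm, Finset.filter_univ_mem]
    rw [e1, hMVt, h]
    omega
  -- injection from MVt into St'
  have hinj : MVt.card ≤ St'.card := by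
    apply Finset.card_le_card_of_injOn (fun v => σ.symm v)
    · intro v hv
      rw [hMVt, Finset.mem_coe, Finset.mem_filter, Finset.mem_filter] at hv
      rcases hv with ⟨⟨-, hbig⟩, hnot⟩
      have hmin : ¬ IsNM σ (σ.symm v) := (image_not_NMpos σ).1 hnot
      rw [hSt', Finset.mem_coe, Finset.mem_filter, hMins, Finset.mem_filter]
      refine ⟨⟨Finset.mem_univ _, hmin⟩, ?_⟩
      have hb := min_pos_bound hmin
      rw [Equiv.apply_symm_apply] at hb
      beta_reduce
      omega
    · intro a _ b _ hab
      exact (Equiv.injective _) hab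
  have hsub' : St' ⊆ St := by
    intro i hi
    rw [hSt', Finset.mem_filter] at hi
    rw [hSt, Finset.mem_filter]
    exact ⟨hi.1, by omega⟩
  -- key: MVt.card + 1 ≤ St.card
  have hkey : MVt.card + 1 ≤ St.card := by
    have htm1 : t - 1 < n := by omega
    set p : Fin n := ⟨t - 1, htm1⟩ with hp
    by_cases hpm : p ∈ Mins
    · -- the position t-1 is a minimum, not in St'
      have hins : insert p St' ⊆ St := by
        intro x hx
        rcases Finset.mem_insert.1 hx with rfl | hx
        · rw [hSt, Finset.mem_filter]
          exact ⟨hpm, by simp [hp]; omega⟩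
        · exact hsub' hx
      have hpn : p ∉ St' := by
        rw [hSt', Finset.mem_filter]
        push_neg
        intro _
        simp [hp]
      have := Finset.card_le_card hins
      rw [Finset.card_insert_of_notMem hpn] at this
      omega
    · -- t-1 is not a minimum; derive a contradiction if MVt.card ≥ St.card
      by_contra hcon
      push_neg at hcon
      -- then all counts are equal and every position < t-1 has a big value
      have heq1 : MVt.card = St'.card ∧ St'.card = St.card := by
        have h1 := Finset.card_le_card hsub'
        omega
      -- image of MVt under σ.symm equals St', and St' = St
      have hSteq : St' = St := Finset.eq_of_subset_of_card_le hsub' (le_of_eq heq1.2.symm)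
      -- every minimum position < t has a big value
      have hbigmin : ∀ i ∈ St, n - t < ((σ i : Fin n) : ℕ) := by
        intro i hi
        -- σ.symm '' MVt = St'
        have himage : MVt.image (fun v => σ.symm v) = St' := by
          apply Finset.eq_of_subset_of_card_le
          · intro x hx
            rcases Finset.mem_image.1 hx with ⟨v, hv, rfl⟩
            rw [hMVt, Finset.mem_filter, Finset.mem_filter] at hv
            rcases hv with ⟨⟨-, hbig⟩, hnot⟩
            have hmin : ¬ IsNM σ (σ.symm v) := (image_not_NMpos σ).1 hnot
            rw [hSt', Finset.mem_filter, hMins, Finset.mem_filter]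
            refine ⟨⟨Finset.mem_univ _, hmin⟩, ?_⟩
            have hb := min_pos_bound hmin
            rw [Equiv.apply_symm_apply] at hb
            omega
          · rw [Finset.card_image_of_injective _ (Equiv.injective _)]
            omega
        rw [← hSteq] at hi
        rw [← himage] at hi
        rcases Finset.mem_image.1 hi with ⟨v, hv, rfl⟩
        rw [hMVt, Finset.mem_filter, Finset.mem_filter] at hv
        rw [Equiv.apply_symm_apply]
        exact hv.1.2
      -- every position < t-1 has a big value
      have hbigall : ∀ j : Fin n, (j : ℕ) < t - 1 → n - t < ((σ j : Fin n) : ℕ) := by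
        intro j hj
        rcases exists_min_le σ j with ⟨i, hij, hmin, hle⟩
        have hiSt : i ∈ St := by
          rw [hSt, Finset.mem_filter, hMins, Finset.mem_filter]
          refine ⟨⟨Finset.mem_univ _, hmin⟩, ?_⟩
          have : (i : ℕ) ≤ (j : ℕ) := hij
          omega
        have := hbigmin i hiSt
        have : ((σ i : Fin n) : ℕ) ≤ ((σ j : Fin n) : ℕ) := hle
        omega
      -- so the image of positions < t-1 is exactly the top t-1 values
      have himg : (Finset.univ.filter (fun j : Fin n => (j : ℕ) < t - 1)).image σ
          = Finset.univ.filter (fun x : Fin n => n - t < (x : ℕ)) := by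
        apply Finset.eq_of_subset_of_card_le
        · intro x hx
          rcases Finset.mem_image.1 hx with ⟨j, hj, rfl⟩
          rw [Finset.mem_filter] at hj ⊢
          exact ⟨Finset.mem_univ _, hbigall j hj.2⟩
        · rw [Finset.card_image_of_injective _ (Equiv.injective _),
            card_filter_val_gt (show n - t < n by omega),
            card_filter_val_lt (show t - 1 ≤ n by omega)]
          omega
      -- but p = t-1 is a non-minimum: its witness has a big value, contradiction
      have hpnm : IsNM σ p := by
        rw [hMins, Finset.mem_filter] at hpm
        push_neg at hpm
        exact hpm (Finset.mem_univ _)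
      rcases hpnm with ⟨j, hjp, hjlt⟩
      have hjval : (j : ℕ) < t - 1 := hjp
      -- σ p is not big
      have hpnot : ¬ (n - t < ((σ p : Fin n) : ℕ)) := by
        intro hbig
        have : σ p ∈ (Finset.univ.filter (fun j : Fin n => (j : ℕ) < t - 1)).image σ := by
          rw [himg, Finset.mem_filter]
          exact ⟨Finset.mem_univ _, hbig⟩
        rcases Finset.mem_image.1 this with ⟨j', hj', hj'e⟩
        have : j' = p := σ.injective hj'e
        rw [this, Finset.mem_filter] at hj'
        have := hj'.2
        simp [hp] at this
      have h1 := hbigall j hjval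
      have h2 : ((σ j : Fin n) : ℕ) < ((σ p : Fin n) : ℕ) := hjlt
      omega
  omega

/-- Core asymmetric step for injectivity. -/
lemma avoider_eq_aux {σ τ : Equiv.Perm (Fin n)} (hτ : Avoids132 n τ)
    (h1 : NMpos σ = NMpos τ) (h2 : NMval σ = NMval τ) {i₀ : Fin n}
    (hpre : ∀ j, j < i₀ → σ j = τ j) (hlt : σ i₀ < τ i₀) : False := by
  set w := σ i₀ with hw
  set p := τ.symm w with hp
  have hτp : τ p = w := by simp [hp]
  have hpi : i₀ < p := by
    rcases lt_trichotomy p i₀ with h | h | h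
    · have := hpre p h
      have : σ p = σ i₀ := by rw [this, hτp]
      exact absurd (σ.injective this) (ne_of_lt h)
    · rw [h] at hτp; exact absurd hτp (ne_of_lt hlt).symm
    · exact h
  by_cases hnm : i₀ ∈ NMpos σ
  · rcases mem_NMpos_iff.1 hnm with ⟨j, hj, hjlt⟩
    have hτj : τ j = σ j := (hpre j hj).symm
    refine hτ j i₀ p hj hpi ⟨?_, ?_⟩
    · rw [hτp, hτj, hw]; exact hjlt
    · rw [hτp]; exact hlt
  · -- i₀ is a minimum for σ hence for τ; derive contradiction via value τ i₀
    set v := τ i₀ with hv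
    set r := σ.symm v with hr
    have hσr : σ r = v := by simp [hr]
    have hri : i₀ < r := by
      rcases lt_trichotomy r i₀ with h | h | h
      · have := hpre r h
        have : τ r = τ i₀ := by rw [← this, hσr]
        exact absurd (τ.injective this) (ne_of_lt h)
      · rw [h, ← hw] at hσr; exact absurd hσr (ne_of_lt hlt)
      · exact h
    have hrnm : r ∈ NMpos σ := mem_NMpos_iff.2 ⟨i₀, hri, by rw [hσr, ← hw]; exact hlt⟩
    have hvval : v ∈ NMval σ := Finset.mem_image.2 ⟨r, hrnm, hσr⟩
    rw [h2] at hvval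
    have : τ.symm v ∈ NMpos τ := mem_NMval_iff.1 hvval
    have : i₀ ∈ NMpos τ := by simpa [hv] using this
    rw [← h1] at this
    exact hnm this

theorem avoider_eq {σ τ : Equiv.Perm (Fin n)} (hσ : Avoids132 n σ) (hτ : Avoids132 n τ)
    (h1 : NMpos σ = NMpos τ) (h2 : NMval σ = NMval τ) : σ = τ := by
  classical
  by_contra hne
  have hS : (Finset.univ.filter (fun i : Fin n => σ i ≠ τ i)).Nonempty := by
    by_contra h
    rw [Finset.not_nonempty_iff_eq_empty, Finset.filter_eq_empty_iff] at h
    exact hne (Equiv.ext (fun i => by have := h (Finset.mem_univ i); simpa using this))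
  set i₀ := (Finset.univ.filter (fun i : Fin n => σ i ≠ τ i)).min' hS with hi₀
  have hmem := (Finset.univ.filter (fun i : Fin n => σ i ≠ τ i)).min'_mem hS
  have hne₀ : σ i₀ ≠ τ i₀ := by
    rw [hi₀]; exact (Finset.mem_filter.1 hmem).2
  have hpre : ∀ j, j < i₀ → σ j = τ j := by
    intro j hj
    by_contra hc
    have : i₀ ≤ j := Finset.min'_le (Finset.univ.filter (fun i : Fin n => σ i ≠ τ i)) j
      (Finset.mem_filter.2 ⟨Finset.mem_univ _, hc⟩)
    exact absurd hj (not_lt.2 this)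
  rcases lt_or_gt_of_ne hne₀ with h | h
  · exact avoider_eq_aux hτ h1 h2 hpre h
  · exact avoider_eq_aux hσ h1.symm h2.symm (fun j hj => (hpre j hj).symm) h

/-! ### helpers for the existence proof -/

lemma succAbove_val {m : ℕ} (p : Fin (m+1)) (x : Fin m) :
    ((p.succAbove x : Fin (m+1)) : ℕ) = if (x : ℕ) < (p : ℕ) then (x : ℕ) else (x : ℕ) + 1 := by
  rcases Nat.lt_or_ge (x : ℕ) (p : ℕ) with h | h
  · rw [Fin.succAbove_of_castSucc_lt _ _ (by rwa [Fin.lt_def, Fin.coe_castSucc]), if_pos h,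
      Fin.coe_castSucc]
  · rw [Fin.succAbove_of_le_castSucc _ _ (by rwa [Fin.le_def, Fin.coe_castSucc]),
      if_neg (by omega), Fin.val_succ]

lemma cnt_le_card {X : Finset (Fin n)} (t : ℕ) : cnt X t ≤ X.card :=
  Finset.card_le_card (Finset.filter_subset _ _)

lemma cnt_full {X : Finset (Fin n)} : cnt X n = X.card := by
  unfold cnt
  rw [Finset.filter_true_of_mem (fun i _ => i.isLt)]

lemma cnt_erase {X : Finset (Fin n)} {a : Fin n} (ha : a ∈ X) (t : ℕ) :
    cnt (X.erase a) t + (if (a : ℕ) < t then 1 else 0) = cnt X t := by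
  classical
  unfold cnt
  rw [Finset.filter_erase]
  by_cases h : (a : ℕ) < t
  · rw [if_pos h, Finset.card_erase_of_mem (Finset.mem_filter.2 ⟨ha, h⟩)]
    have hpos : 0 < (X.filter (fun i : Fin n => (i : ℕ) < t)).card :=
      Finset.card_pos.2 ⟨a, Finset.mem_filter.2 ⟨ha, h⟩⟩
    omega
  · have hnot : a ∉ X.filter (fun i : Fin n => (i : ℕ) < t) :=
      fun hmem => h (Finset.mem_filter.1 hmem).2
    rw [if_neg h, Finset.erase_eq_of_notMem hnot]
    omega

lemma cnt_succ_le {X : Finset (Fin n)} (t : ℕ) :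
    cnt X (t + 1) ≤ cnt X t + 1 := by
  classical
  unfold cnt
  have hsub : X.filter (fun i : Fin n => (i : ℕ) < t + 1)
      ⊆ X.filter (fun i : Fin n => (i : ℕ) < t) ∪ X.filter (fun i : Fin n => (i : ℕ) = t) := by
    intro i hi
    rw [Finset.mem_filter] at hi
    rw [Finset.mem_union, Finset.mem_filter, Finset.mem_filter]
    rcases Nat.lt_or_ge (i : ℕ) t with h | h
    · exact Or.inl ⟨hi.1, h⟩
    · exact Or.inr ⟨hi.1, by omega⟩
  have hle := Finset.card_le_card hsub
  have hun := Finset.card_union_le (X.filter (fun i : Fin n => (i : ℕ) < t))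
    (X.filter (fun i : Fin n => (i : ℕ) = t))
  have hone : (X.filter (fun i : Fin n => (i : ℕ) = t)).card ≤ 1 := by
    apply Finset.card_le_one.2
    intro a ha b hb
    rw [Finset.mem_filter] at ha hb
    exact Fin.ext (by omega)
  omega

lemma cnt_succAbove_le {m : ℕ} (q : Fin (m+1)) (C : Finset (Fin (m+1))) {t : ℕ}
    (ht : t ≤ (q : ℕ)) :
    cnt (Finset.univ.filter (fun j : Fin m => q.succAbove j ∈ C)) t = cnt C t := by
  classical
  unfold cnt
  apply Finset.card_bij (fun j _ => q.succAbove j)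
  · intro j hj
    rw [Finset.mem_filter, Finset.mem_filter] at hj
    rcases hj with ⟨⟨-, hjC⟩, hjt⟩
    rw [Finset.mem_filter]
    refine ⟨hjC, ?_⟩
    rw [succAbove_val, if_pos (by omega)]
    exact hjt
  · intro a _ b _ hab
    exact Fin.succAbove_right_injective hab
  · intro c hc
    rw [Finset.mem_filter] at hc
    rcases hc with ⟨hcC, hct⟩
    have hcq : c ≠ q := by
      intro h
      rw [h] at hct
      omega
    obtain ⟨j, hj⟩ := Fin.exists_succAbove_eq hcq
    have hjv := succAbove_val q j
    rw [hj] at hjv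
    refine ⟨j, ?_, hj⟩
    rw [Finset.mem_filter, Finset.mem_filter]
    refine ⟨⟨Finset.mem_univ _, by rw [hj]; exact hcC⟩, ?_⟩
    by_cases hcase : (j : ℕ) < (q : ℕ)
    · rw [if_pos hcase] at hjv; omega
    · rw [if_neg hcase] at hjv; omega

lemma cnt_succAbove_ge {m : ℕ} (q : Fin (m+1)) (C : Finset (Fin (m+1))) (hqC : q ∈ C)
    {t : ℕ} (hq : (q : ℕ) ≤ t) :
    cnt (Finset.univ.filter (fun j : Fin m => q.succAbove j ∈ C)) t + 1 = cnt C (t + 1) := by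
  classical
  have hqmem : q ∈ C.filter (fun i : Fin (m+1) => (i : ℕ) < t + 1) :=
    Finset.mem_filter.2 ⟨hqC, by omega⟩
  have key : cnt (Finset.univ.filter (fun j : Fin m => q.succAbove j ∈ C)) t
      = ((C.filter (fun i : Fin (m+1) => (i : ℕ) < t + 1)).erase q).card := by
    unfold cnt
    apply Finset.card_bij (fun j _ => q.succAbove j)
    · intro j hj
      rw [Finset.mem_filter, Finset.mem_filter] at hj
      rcases hj with ⟨⟨-, hjC⟩, hjt⟩
      rw [Finset.mem_erase, Finset.mem_filter]
      refine ⟨Fin.succAbove_ne q j, hjC, ?_⟩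
      rw [succAbove_val]
      split <;> omega
    · intro a _ b _ hab
      exact Fin.succAbove_right_injective hab
    · intro c hc
      rw [Finset.mem_erase, Finset.mem_filter] at hc
      rcases hc with ⟨hcq, hcC, hct⟩
      obtain ⟨j, hj⟩ := Fin.exists_succAbove_eq hcq
      have hjv := succAbove_val q j
      rw [hj] at hjv
      refine ⟨j, ?_, hj⟩
      rw [Finset.mem_filter, Finset.mem_filter]
      refine ⟨⟨Finset.mem_univ _, by rw [hj]; exact hcC⟩, ?_⟩
      by_cases hcase : (j : ℕ) < (q : ℕ)
      · rw [if_pos hcase] at hjv; omega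
      · rw [if_neg hcase] at hjv; omega
  rw [key, Finset.card_erase_of_mem hqmem]
  have hpos : 0 < (C.filter (fun i : Fin (m+1) => (i : ℕ) < t + 1)).card :=
    Finset.card_pos.2 ⟨q, hqmem⟩
  unfold cnt
  omega

theorem exists_avoider : ∀ (k : ℕ) {n : ℕ} [NeZero n] (A B : Finset (Fin n)),
    A.card = k + 1 → B.card = k → IsGood A B →
    ∃ σ : Equiv.Perm (Fin n), Avoids132 n σ ∧ NMpos σ = B ∧ encA σ = A := by
  intro k
  induction k with
  | zero =>
    intro n _ A B hA hB hg
    classical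
    have hn0 : 0 < n := Nat.pos_of_ne_zero (NeZero.ne n)
    have hB0 : B = ∅ := Finset.card_eq_zero.1 hB
    have h1 := isGood_iff.1 hg 1 one_pos hn0
    have hBc : cnt B 1 = 0 := by rw [hB0]; simp [cnt]
    have h0A : (0 : Fin n) ∈ A := by
      have hpos : 0 < cnt A 1 := by omega
      obtain ⟨a, ha⟩ := Finset.card_pos.1 hpos
      rw [Finset.mem_filter] at ha
      have : a = 0 := Fin.ext (by simp only [Fin.val_zero]; omega)
      rw [← this]
      exact ha.1
    have hA1 : A = {0} := by
      rcases Finset.card_eq_one.1 hA with ⟨x, hx⟩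
      rw [hx] at h0A ⊢
      rw [Finset.mem_singleton] at h0A
      rw [← h0A]
    have hrevpos : NMpos (Fin.revPerm : Equiv.Perm (Fin n)) = ∅ := by
      rw [Finset.eq_empty_iff_forall_notMem]
      intro i hi
      rcases mem_NMpos_iff.1 hi with ⟨j, hj, hlt⟩
      rw [Fin.revPerm_apply, Fin.revPerm_apply, Fin.rev_lt_rev] at hlt
      exact absurd (lt_trans hj hlt) (lt_irrefl _)
    refine ⟨Fin.revPerm, ?_, by rw [hrevpos, hB0], ?_⟩
    · intro i j l hij hjl ⟨hc1, hc2⟩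
      rw [Fin.revPerm_apply, Fin.revPerm_apply, Fin.rev_lt_rev] at hc1
      exact absurd (lt_trans hij (lt_trans hjl hc1)) (lt_irrefl _)
    · rw [encA, NMval, hrevpos, hA1]
      simp
  | succ k ih =>
    intro n _ A B hA hB hg
    classical
    have hn0 : 0 < n := Nat.pos_of_ne_zero (NeZero.ne n)
    have hgood := isGood_iff.1 hg
    -- 0 ∈ A and 0 ∉ B
    have hcntA1 : cnt A 1 ≤ 1 := by
      have h := Finset.card_le_card
        (Finset.filter_subset_filter (fun i : Fin n => (i : ℕ) < 1) (Finset.subset_univ A))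
      rw [card_filter_val_lt hn0] at h
      exact h
    have hg1 := hgood 1 one_pos hn0
    have hB1 : cnt B 1 = 0 := by omega
    have h0A : (0 : Fin n) ∈ A := by
      have hpos : 0 < cnt A 1 := by omega
      obtain ⟨a, ha⟩ := Finset.card_pos.1 hpos
      rw [Finset.mem_filter] at ha
      have : a = 0 := Fin.ext (by simp only [Fin.val_zero]; omega)
      rw [← this]
      exact ha.1
    have h0B : (0 : Fin n) ∉ B := by
      intro h
      have : 0 < cnt B 1 := Finset.card_pos.2 ⟨0, Finset.mem_filter.2 ⟨h, by simp⟩⟩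
      omega
    -- B is nonempty so n ≥ 2
    obtain ⟨b₀, hb₀⟩ := Finset.card_pos.1 (show 0 < B.card by omega)
    have hb₀0 : (b₀ : ℕ) ≠ 0 := by
      intro h
      have : (0 : Fin n) = b₀ := Fin.ext (by simp only [Fin.val_zero]; omega)
      exact h0B (this ▸ hb₀)
    have hn2 : 2 ≤ n := by
      have := b₀.isLt
      omega
    obtain ⟨m, rfl⟩ : ∃ m, n = m + 1 := ⟨n - 1, by omega⟩
    have hm1 : 1 ≤ m := by omega
    haveI : NeZero m := ⟨by omega⟩
    -- the maximal element of A
    have hAne : A.Nonempty := Finset.card_pos.1 (by omega)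
    set aM := A.max' hAne with haM
    have haMA : aM ∈ A := A.max'_mem hAne
    have haMle : ∀ a ∈ A, a ≤ aM := fun a ha => A.le_max' a ha
    have haM1 : 1 ≤ (aM : ℕ) := by
      by_contra hc
      push_neg at hc
      have hsub : A ⊆ {0} := by
        intro a ha
        have h1 := haMle a ha
        rw [Fin.le_def] at h1
        rw [Finset.mem_singleton]
        exact Fin.ext (by simp only [Fin.val_zero]; omega)
      have := Finset.card_le_card hsub
      rw [Finset.card_singleton] at this
      omega
    have haMm : (aM : ℕ) ≤ m := by
      have := aM.isLt
      omega
    -- the new maximal non-minimum value (as a natural number)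
    set w0 := m + 1 - (aM : ℕ) with hw0
    have hw01 : 1 ≤ w0 := by omega
    have hw0m : w0 ≤ m := by omega
    -- the insertion-position condition
    set Qc : Fin (m+1) → Prop := fun b => (aM : ℕ) + cnt B (b : ℕ) < (b : ℕ) + k + 1 with hQc
    -- there exists b ∈ B with aM ≤ b, and it satisfies Qc
    have hcntBb : ∀ b : Fin (m+1), b ∈ B → cnt B (b : ℕ) ≤ k := by
      intro b hbB
      have hsub : B.filter (fun i : Fin (m+1) => (i : ℕ) < (b : ℕ)) ⊆ B.erase b := by
        intro x hx
        rw [Finset.mem_filter] at hx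
        rw [Finset.mem_erase]
        exact ⟨by intro h; rw [h] at hx; omega, hx.1⟩
      have := Finset.card_le_card hsub
      rw [Finset.card_erase_of_mem hbB, hB] at this
      exact le_trans this (by omega)
    have hbst : ∃ b ∈ B, (aM : ℕ) ≤ (b : ℕ) := by
      by_contra hc
      push_neg at hc
      have : B ⊆ B.filter (fun i : Fin (m+1) => (i : ℕ) < (aM : ℕ)) := by
        intro b hbB
        exact Finset.mem_filter.2 ⟨hbB, hc b hbB⟩
      have h1 := Finset.card_le_card this
      have h2 : cnt A (aM : ℕ) ≤ k + 1 := by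
        have hsub : A.filter (fun i : Fin (m+1) => (i : ℕ) < (aM : ℕ)) ⊆ A.erase aM := by
          intro x hx
          rw [Finset.mem_filter] at hx
          rw [Finset.mem_erase]
          exact ⟨by intro h; rw [h] at hx; omega, hx.1⟩
        have := Finset.card_le_card hsub
        rw [Finset.card_erase_of_mem haMA, hA] at this
        exact le_trans this (by omega)
      have h3 := hgood (aM : ℕ) (by omega) (by omega)
      rw [hB] at h1
      have h1' : k + 1 ≤ cnt B (aM : ℕ) := h1
      omega
    obtain ⟨bst, hbstB, hbstge⟩ := hbst
    have hbstQ : Qc bst := by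
      rw [hQc]
      have := hcntBb bst hbstB
      omega
    -- q : the insertion position
    have hQne : (B.filter Qc).Nonempty := ⟨bst, Finset.mem_filter.2 ⟨hbstB, hbstQ⟩⟩
    set q := (B.filter Qc).min' hQne with hq
    have hqmem : q ∈ B.filter Qc := by
      rw [hq]
      exact (B.filter Qc).min'_mem hQne
    rw [Finset.mem_filter] at hqmem
    have hqB : q ∈ B := hqmem.1
    have hqQ : Qc q := hqmem.2
    have hqmin : ∀ b ∈ B, Qc b → q ≤ b := by
      intro b hb hQb
      rw [hq]
      exact Finset.min'_le _ b (Finset.mem_filter.2 ⟨hb, hQb⟩)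
    have hq1 : 1 ≤ (q : ℕ) := by
      rcases Nat.eq_zero_or_pos (q : ℕ) with h | h
      · exact absurd (show (0 : Fin (m+1)) ∈ B by
          rwa [show (0 : Fin (m+1)) = q from Fin.ext (by simp only [Fin.val_zero]; omega)])
          h0B
      · exact h
    have hqbst : (q : ℕ) ≤ (bst : ℕ) := hqmin bst hbstB hbstQ
    -- the reduced pair
    set B' := Finset.univ.filter (fun j : Fin m => q.succAbove j ∈ B) with hB'
    set A' := Finset.univ.filter (fun a : Fin m => (Fin.last m).succAbove a ∈ A.erase aM)
      with hA'
    have hB'card : B'.card = k := by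
      have h : cnt B' m + 1 = cnt B (m + 1) :=
        cnt_succAbove_ge q B hqB (show (q : ℕ) ≤ m from by have := q.isLt; omega)
      rw [cnt_full, cnt_full, hB] at h
      omega
    have hAe : ∀ x ∈ A.erase aM, (x : ℕ) < m := by
      intro x hx
      rw [Finset.mem_erase] at hx
      have h1 := haMle x hx.2
      rw [Fin.le_def] at h1
      have : (x : ℕ) ≠ (aM : ℕ) := fun h => hx.1 (Fin.ext h)
      omega
    have hA'card : A'.card = k + 1 := by
      have h : cnt A' m = cnt (A.erase aM) m := cnt_succAbove_le (Fin.last m) (A.erase aM)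
        (t := m) (by simp only [Fin.val_last]; omega)
      rw [cnt_full] at h
      have h2 : cnt (A.erase aM) m = (A.erase aM).card := by
        unfold cnt
        rw [Finset.filter_true_of_mem (fun x hx => hAe x hx)]
      rw [h2, Finset.card_erase_of_mem haMA, hA] at h
      omega
    have hAfull : ∀ t' : ℕ, (aM : ℕ) < t' → cnt A t' = k + 2 := by
      intro t' ht'
      have hft : A.filter (fun i : Fin (m+1) => (i : ℕ) < t') = A := by
        apply Finset.filter_true_of_mem
        intro x hx
        have := haMle x hx
        rw [Fin.le_def] at this
        omega
      unfold cnt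
      rw [hft, hA]
    have hgood' : IsGood A' B' := by
      rw [isGood_iff]
      intro t ht1 htm
      have hAt : cnt A' t = cnt (A.erase aM) t :=
        cnt_succAbove_le (Fin.last m) (A.erase aM) (by simp only [Fin.val_last]; omega)
      have hAe2 := cnt_erase haMA t
      by_cases hcaseq : t ≤ (q : ℕ)
      · have hBt : cnt B' t = cnt B t := cnt_succAbove_le q B hcaseq
        by_cases hcasea : (aM : ℕ) < t
        · have hcntBt : cnt B t ≤ k := by
            have hsub : B.filter (fun i : Fin (m+1) => (i : ℕ) < t) ⊆ B.erase bst := by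
              intro x hx
              rw [Finset.mem_filter] at hx
              rw [Finset.mem_erase]
              refine ⟨?_, hx.1⟩
              intro h
              rw [h] at hx
              omega
            have := Finset.card_le_card hsub
            rw [Finset.card_erase_of_mem hbstB, hB] at this
            exact le_trans this (by omega)
          rw [hBt, hAt]
          rw [if_pos hcasea] at hAe2
          have := hAfull t hcasea
          omega
        · rw [if_neg hcasea] at hAe2
          have := hgood t ht1 (by omega)
          rw [hBt, hAt]
          omega
      · push_neg at hcaseq
        have hBt : cnt B' t + 1 = cnt B (t + 1) := cnt_succAbove_ge q B hqB (by omega)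
        by_cases hcasea : (aM : ℕ) < t
        · rw [if_pos hcasea] at hAe2
          have h1 : cnt B (t + 1) ≤ k + 1 := by
            rw [← hB]
            exact cnt_le_card _
          have := hAfull t hcasea
          rw [hAt]
          omega
        · rw [if_neg hcasea] at hAe2
          have h1 := hgood (t + 1) (by omega) (by omega)
          have h2 := cnt_succ_le (X := A) t
          rw [hAt]
          omega
    -- apply the induction hypothesis
    obtain ⟨τ, hτav, hτpos, hτenc⟩ := ih A' B' hA'card hB'card hgood'
    -- facts about τ's non-minimum values
    have hNMvalτ : NMval τ = (A'.erase 0).image code := by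
      rw [NMval_eq_image_code_erase τ, hτenc]
    have hA'lt : ∀ a ∈ A', (a : ℕ) + 1 ≤ (aM : ℕ) := by
      intro a ha
      rw [hA', Finset.mem_filter] at ha
      obtain ⟨-, hmem⟩ := ha
      rw [Finset.mem_erase] at hmem
      have hle := haMle _ hmem.2
      rw [Fin.le_def] at hle
      have hval : (((Fin.last m).succAbove a : Fin (m+1)) : ℕ) = (a : ℕ) := by
        rw [succAbove_val, if_pos (by rw [Fin.val_last]; exact a.isLt)]
      have hne : (a : ℕ) ≠ (aM : ℕ) := by
        intro h
        exact hmem.1 (Fin.ext (by rw [hval, h]))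
      rw [hval] at hle
      omega
    have hvalge : ∀ x ∈ NMval τ, w0 ≤ (x : ℕ) := by
      intro x hx
      rw [hNMvalτ] at hx
      obtain ⟨a, ha, rfl⟩ := Finset.mem_image.1 hx
      rw [Finset.mem_erase] at ha
      have h0 : (a : ℕ) ≠ 0 := by
        intro h
        exact ha.1 (Fin.ext (by simp only [Fin.val_zero]; omega))
      rw [code_of_ne h0]
      have h1 := hA'lt a ha.2
      have h2 := a.isLt
      omega
    have hNMvalcard : (NMval τ).card = k := by
      rw [NMval, Finset.card_image_of_injective _ (Equiv.injective τ), hτpos, hB'card]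
    -- the set of "big" minimum values of τ
    set Vtop := Finset.univ.filter (fun v : Fin m => w0 ≤ (v : ℕ) ∧ v ∉ NMval τ) with hVt
    have hVtopcard : Vtop.card + k + 1 = (aM : ℕ) := by
      have hbig : (Finset.univ.filter (fun v : Fin m => w0 ≤ (v : ℕ))).card = (aM : ℕ) - 1 := by
        have he : Finset.univ.filter (fun v : Fin m => w0 ≤ (v : ℕ))
            = Finset.univ.filter (fun v : Fin m => w0 - 1 < (v : ℕ)) := by
          apply Finset.filter_congr
          intro v _
          constructor <;> (intro; omega)
        rw [he, card_filter_val_gt (show w0 - 1 < m by omega)]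
        omega
      have hsplit := Finset.card_filter_add_card_filter_not
        (s := Finset.univ.filter (fun v : Fin m => w0 ≤ (v : ℕ))) (p := fun v => v ∈ NMval τ)
      have hNM : (Finset.univ.filter (fun v : Fin m => w0 ≤ (v : ℕ))).filter
          (fun v => v ∈ NMval τ) = NMval τ := by
        ext v
        simp only [Finset.mem_filter, Finset.mem_univ, true_and]
        constructor
        · rintro ⟨-, h⟩; exact h
        · intro h; exact ⟨hvalge v h, h⟩
      have hVeq : Vtop = (Finset.univ.filter (fun v : Fin m => w0 ≤ (v : ℕ))).filter
          (fun v => v ∉ NMval τ) := by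
        rw [hVt, Finset.filter_filter]
      rw [hNM, hbig, hNMvalcard] at hsplit
      rw [hVeq]
      omega
    have hqQ' : (aM : ℕ) + cnt B (q : ℕ) < (q : ℕ) + k + 1 := hqQ
    have hq_le_m : (q : ℕ) ≤ m := by have := q.isLt; omega
    -- there is a position before q with a small value
    have hwit : ∃ j : Fin m, (j : ℕ) < (q : ℕ) ∧ ((τ j : Fin m) : ℕ) < w0 := by
      by_contra hc
      push_neg at hc
      have hMinsSub : ∀ i ∈ (Finset.univ.filter (fun i : Fin m => ¬ IsNM τ i)).filter
          (fun i : Fin m => (i : ℕ) < (q : ℕ)), τ i ∈ Vtop := by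
        intro i hi
        rw [Finset.mem_filter, Finset.mem_filter] at hi
        obtain ⟨⟨-, hmin⟩, hlt⟩ := hi
        rw [hVt, Finset.mem_filter]
        refine ⟨Finset.mem_univ _, hc _ hlt, ?_⟩
        intro hmem
        rw [mem_NMval_iff] at hmem
        rw [Equiv.symm_apply_apply, NMpos, Finset.mem_filter] at hmem
        exact hmin hmem.2
      have hinj2 : ((Finset.univ.filter (fun i : Fin m => ¬ IsNM τ i)).filter
          (fun i : Fin m => (i : ℕ) < (q : ℕ))).card ≤ Vtop.card :=
        Finset.card_le_card_of_injOn τ hMinsSub (fun a _ b _ h => τ.injective h)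
      have hpart := Finset.card_filter_add_card_filter_not
        (s := Finset.univ.filter (fun i : Fin m => (i : ℕ) < (q : ℕ))) (p := IsNM τ)
      rw [card_filter_val_lt hq_le_m] at hpart
      have he1 : (Finset.univ.filter (fun i : Fin m => (i : ℕ) < (q : ℕ))).filter (IsNM τ)
          = (NMpos τ).filter (fun i : Fin m => (i : ℕ) < (q : ℕ)) := by
        rw [NMpos, Finset.filter_comm]
      have he2 : (Finset.univ.filter (fun i : Fin m => (i : ℕ) < (q : ℕ))).filter
          (fun a => ¬ IsNM τ a)
          = (Finset.univ.filter (fun i : Fin m => ¬ IsNM τ i)).filter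
            (fun i : Fin m => (i : ℕ) < (q : ℕ)) := by
        rw [Finset.filter_comm]
      rw [he1, he2] at hpart
      have hcntB' : cnt (NMpos τ) (q : ℕ) = cnt B (q : ℕ) := by
        rw [hτpos]
        exact cnt_succAbove_le q B (le_refl _)
      have hq2 : cnt (NMpos τ) (q : ℕ)
          = ((NMpos τ).filter (fun i : Fin m => (i : ℕ) < (q : ℕ))).card := rfl
      omega
    -- no small value before a big value before q
    have hlh : ∀ i' j' : Fin m, (i' : ℕ) < (j' : ℕ) → (j' : ℕ) < (q : ℕ) →
        ((τ i' : Fin m) : ℕ) < w0 → w0 ≤ ((τ j' : Fin m) : ℕ) → False := by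
      intro i' j' hij hjq hlow hhigh
      have hj'NM : j' ∈ NMpos τ := mem_NMpos_iff.2 ⟨i', by rw [Fin.lt_def]; exact hij,
        by rw [Fin.lt_def]; omega⟩
      have hbB : q.succAbove j' ∈ B := by
        have hmem : j' ∈ B' := by rw [← hτpos]; exact hj'NM
        rw [hB', Finset.mem_filter] at hmem
        exact hmem.2
      have hbval : ((q.succAbove j' : Fin (m+1)) : ℕ) = (j' : ℕ) := by
        rw [succAbove_val, if_pos hjq]
      have hVsub : ∀ v ∈ Vtop, τ.symm v ∈ (Finset.univ.filter (fun i : Fin m => ¬ IsNM τ i)).filter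
          (fun i : Fin m => (i : ℕ) < (j' : ℕ)) := by
        intro v hv
        rw [hVt, Finset.mem_filter] at hv
        obtain ⟨-, hvw, hvNM⟩ := hv
        have hmin : ¬ IsNM τ (τ.symm v) := (image_not_NMpos τ).1 hvNM
        rw [Finset.mem_filter, Finset.mem_filter]
        refine ⟨⟨Finset.mem_univ _, hmin⟩, ?_⟩
        by_contra hge
        push_neg at hge
        apply hmin
        refine ⟨i', ?_, ?_⟩
        · rw [Fin.lt_def]; omega
        · rw [Fin.lt_def, Equiv.apply_symm_apply]; omega
      obtain ⟨i₀, hi₀le, hi₀min, hi₀val⟩ := exists_min_le τ i'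
      rw [Fin.le_def] at hi₀le hi₀val
      have hi₀mem : i₀ ∈ (Finset.univ.filter (fun i : Fin m => ¬ IsNM τ i)).filter
          (fun i : Fin m => (i : ℕ) < (j' : ℕ)) := by
        rw [Finset.mem_filter, Finset.mem_filter]
        exact ⟨⟨Finset.mem_univ _, hi₀min⟩, by omega⟩
      have hi₀not : i₀ ∉ Vtop.image (fun v => τ.symm v) := by
        intro hmem
        obtain ⟨v, hv, hveq⟩ := Finset.mem_image.1 hmem
        rw [hVt, Finset.mem_filter] at hv
        have hv1 : τ i₀ = v := by rw [← hveq, Equiv.apply_symm_apply]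
        have hv2 := hv.2.1
        rw [← hv1] at hv2
        omega
      have himgsub : insert i₀ (Vtop.image (fun v => τ.symm v))
          ⊆ (Finset.univ.filter (fun i : Fin m => ¬ IsNM τ i)).filter
            (fun i : Fin m => (i : ℕ) < (j' : ℕ)) := by
        intro x hx
        rcases Finset.mem_insert.1 hx with rfl | hx
        · exact hi₀mem
        · obtain ⟨v, hv, rfl⟩ := Finset.mem_image.1 hx
          exact hVsub v hv
      have hcard2 : Vtop.card + 1 ≤ ((Finset.univ.filter (fun i : Fin m => ¬ IsNM τ i)).filter
          (fun i : Fin m => (i : ℕ) < (j' : ℕ))).card := by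
        have h := Finset.card_le_card himgsub
        rw [Finset.card_insert_of_notMem hi₀not,
          Finset.card_image_of_injective _ (Equiv.injective _)] at h
        omega
      have hpart := Finset.card_filter_add_card_filter_not
        (s := Finset.univ.filter (fun i : Fin m => (i : ℕ) < (j' : ℕ))) (p := IsNM τ)
      rw [card_filter_val_lt (show (j' : ℕ) ≤ m from le_of_lt j'.isLt)] at hpart
      have he1 : (Finset.univ.filter (fun i : Fin m => (i : ℕ) < (j' : ℕ))).filter (IsNM τ)
          = (NMpos τ).filter (fun i : Fin m => (i : ℕ) < (j' : ℕ)) := by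
        rw [NMpos, Finset.filter_comm]
      have he2 : (Finset.univ.filter (fun i : Fin m => (i : ℕ) < (j' : ℕ))).filter
          (fun a => ¬ IsNM τ a)
          = (Finset.univ.filter (fun i : Fin m => ¬ IsNM τ i)).filter
            (fun i : Fin m => (i : ℕ) < (j' : ℕ)) := by
        rw [Finset.filter_comm]
      rw [he1, he2] at hpart
      have hcntB' : cnt (NMpos τ) (j' : ℕ) = cnt B (j' : ℕ) := by
        rw [hτpos]
        exact cnt_succAbove_le q B (le_of_lt hjq)
      have hq2 : cnt (NMpos τ) (j' : ℕ)
          = ((NMpos τ).filter (fun i : Fin m => (i : ℕ) < (j' : ℕ))).card := rfl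
      have hQb : Qc (q.succAbove j') := by
        show (aM : ℕ) + cnt B ((q.succAbove j' : Fin (m+1)) : ℕ)
          < ((q.succAbove j' : Fin (m+1)) : ℕ) + k + 1
        rw [hbval]
        omega
      have hqle := hqmin _ hbB hQb
      rw [Fin.le_def, hbval] at hqle
      omega
    -- construct σ by inserting the value w at position q
    set w : Fin (m+1) := ⟨w0, by omega⟩ with hwdef
    set σ : Equiv.Perm (Fin (m+1)) :=
      (finSuccEquiv' q).trans ((τ.optionCongr).trans (finSuccEquiv' w).symm) with hσdef
    have hσq : σ q = w := by rw [hσdef]; simp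
    have hσs : ∀ j : Fin m, σ (q.succAbove j) = w.succAbove (τ j) := by
      intro j
      rw [hσdef]
      simp
    have hwval : (w : ℕ) = w0 := rfl
    have hsv : ∀ x : Fin m, ((w.succAbove x : Fin (m+1)) : ℕ)
        = if (x : ℕ) < w0 then (x : ℕ) else (x : ℕ) + 1 := by
      intro x
      rw [succAbove_val, hwval]
    have hqv : ∀ j : Fin m, ((q.succAbove j : Fin (m+1)) : ℕ)
        = if (j : ℕ) < (q : ℕ) then (j : ℕ) else (j : ℕ) + 1 := fun j => succAbove_val q j
    -- q is a non-minimum of σ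
    have hIsNMq : IsNM σ q := by
      obtain ⟨j, hjq, hjw⟩ := hwit
      refine ⟨q.succAbove j, ?_, ?_⟩
      · rw [Fin.lt_def, hqv j, if_pos hjq]
        exact hjq
      · rw [hσs, hσq, Fin.lt_def, hsv, if_pos hjw, hwval]
        exact hjw
    -- non-minimality transfers along succAbove
    have hIsNM_sA : ∀ j : Fin m, IsNM σ (q.succAbove j) ↔ IsNM τ j := by
      intro j
      constructor
      · rintro ⟨i0, hi0lt, hi0val⟩
        by_cases hi0q : i0 = q
        · subst hi0q
          rw [Fin.lt_def, hqv j] at hi0lt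
          rw [hσq, hσs, Fin.lt_def, hsv, hwval] at hi0val
          have hτjge : w0 ≤ ((τ j : Fin m) : ℕ) := by
            split_ifs at hi0val <;> omega
          obtain ⟨j₀, hj₀q, hj₀w⟩ := hwit
          have hjge : (q : ℕ) ≤ (j : ℕ) := by
            split_ifs at hi0lt <;> omega
          exact ⟨j₀, by rw [Fin.lt_def]; omega, by rw [Fin.lt_def]; omega⟩
        · obtain ⟨j0, hj0⟩ := Fin.exists_succAbove_eq hi0q
          subst hj0
          rw [Fin.lt_def, hqv, hqv] at hi0lt
          rw [hσs, hσs, Fin.lt_def, hsv, hsv] at hi0val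
          refine ⟨j0, ?_, ?_⟩
          · rw [Fin.lt_def]
            split_ifs at hi0lt <;> omega
          · rw [Fin.lt_def]
            split_ifs at hi0val <;> omega
      · rintro ⟨j0, hj0lt, hj0val⟩
        rw [Fin.lt_def] at hj0lt hj0val
        refine ⟨q.succAbove j0, ?_, ?_⟩
        · rw [Fin.lt_def, hqv, hqv]
          split_ifs <;> omega
        · rw [hσs, hσs, Fin.lt_def, hsv, hsv]
          split_ifs <;> omega
    -- the non-minimum positions of σ are exactly B
    have hpos : NMpos σ = B := by
      ext i
      by_cases hiq : i = q
      · subst hiq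
        rw [mem_NMpos_iff]
        constructor
        · intro _; exact hqB
        · intro _; exact hIsNMq
      · obtain ⟨j, rfl⟩ := Fin.exists_succAbove_eq hiq
        rw [mem_NMpos_iff]
        constructor
        · intro h
          have h1 : IsNM τ j := (hIsNM_sA j).1 h
          have h2 : j ∈ B' := by
            rw [← hτpos, NMpos]
            exact Finset.mem_filter.2 ⟨Finset.mem_univ _, h1⟩
          rw [hB', Finset.mem_filter] at h2
          exact h2.2
        · intro h
          have hjB' : j ∈ B' := by
            rw [hB']
            exact Finset.mem_filter.2 ⟨Finset.mem_univ _, h⟩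
          have h2 : j ∈ NMpos τ := by rw [hτpos]; exact hjB'
          rw [NMpos, Finset.mem_filter] at h2
          exact (hIsNM_sA j).2 h2.2
    -- σ avoids the pattern 132
    have hav : Avoids132 (m+1) σ := by
      rintro a b c hab hbc ⟨h1, h2⟩
      by_cases haq : a = q
      · subst haq
        obtain ⟨jb, rfl⟩ := Fin.exists_succAbove_eq hab.ne'
        obtain ⟨jc, rfl⟩ := Fin.exists_succAbove_eq (show c ≠ q from (lt_trans hab hbc).ne')
        have hqjb : (q : ℕ) ≤ (jb : ℕ) := by
          rw [Fin.lt_def, hqv] at hab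
          split_ifs at hab <;> omega
        have hjbc : (jb : ℕ) < (jc : ℕ) := by
          rw [Fin.lt_def, hqv, hqv] at hbc
          split_ifs at hbc <;> omega
        have hvc : w0 ≤ ((τ jc : Fin m) : ℕ) := by
          rw [hσq, hσs, Fin.lt_def, hsv, hwval] at h1
          split_ifs at h1 <;> omega
        have hcb : ((τ jc : Fin m) : ℕ) < ((τ jb : Fin m) : ℕ) := by
          rw [hσs, hσs, Fin.lt_def, hsv, hsv] at h2
          split_ifs at h2 <;> omega
        obtain ⟨j₀, hj₀q, hj₀w⟩ := hwit
        exact hτav j₀ jb jc (by rw [Fin.lt_def]; omega) (by rw [Fin.lt_def]; omega)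
          ⟨by rw [Fin.lt_def]; omega, by rw [Fin.lt_def]; omega⟩
      · obtain ⟨ja, rfl⟩ := Fin.exists_succAbove_eq haq
        by_cases hbq : b = q
        · subst hbq
          obtain ⟨jc, rfl⟩ := Fin.exists_succAbove_eq hbc.ne'
          have hjaq : (ja : ℕ) < (q : ℕ) := by
            rw [Fin.lt_def, hqv] at hab
            split_ifs at hab <;> omega
          have hjcq : (q : ℕ) ≤ (jc : ℕ) := by
            rw [Fin.lt_def, hqv] at hbc
            split_ifs at hbc <;> omega
          have hvc : ((τ jc : Fin m) : ℕ) < w0 := by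
            rw [hσs, hσq, Fin.lt_def, hsv, hwval] at h2
            split_ifs at h2 <;> omega
          have hac : ((τ ja : Fin m) : ℕ) < ((τ jc : Fin m) : ℕ) := by
            rw [hσs, hσs, Fin.lt_def, hsv, hsv] at h1
            split_ifs at h1 <;> omega
          have hNMc : τ jc ∈ NMval τ := by
            rw [NMval, Finset.mem_image]
            refine ⟨jc, ?_, rfl⟩
            rw [NMpos, Finset.mem_filter]
            exact ⟨Finset.mem_univ _,
              ⟨ja, by rw [Fin.lt_def]; omega, by rw [Fin.lt_def]; omega⟩⟩
          have := hvalge _ hNMc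
          omega
        · obtain ⟨jb, rfl⟩ := Fin.exists_succAbove_eq hbq
          by_cases hcq : c = q
          · subst hcq
            have hjbq : (jb : ℕ) < (q : ℕ) := by
              rw [Fin.lt_def, hqv] at hbc
              split_ifs at hbc <;> omega
            have hjab : (ja : ℕ) < (jb : ℕ) := by
              rw [Fin.lt_def, hqv, hqv] at hab
              split_ifs at hab <;> omega
            have hva : ((τ ja : Fin m) : ℕ) < w0 := by
              rw [hσs, hσq, Fin.lt_def, hsv, hwval] at h1
              split_ifs at h1 <;> omega
            have hvb : w0 ≤ ((τ jb : Fin m) : ℕ) := by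
              rw [hσq, hσs, Fin.lt_def, hsv, hwval] at h2
              split_ifs at h2 <;> omega
            exact hlh ja jb hjab hjbq hva hvb
          · obtain ⟨jc, rfl⟩ := Fin.exists_succAbove_eq hcq
            have hjab : (ja : ℕ) < (jb : ℕ) := by
              rw [Fin.lt_def, hqv, hqv] at hab
              split_ifs at hab <;> omega
            have hjbc : (jb : ℕ) < (jc : ℕ) := by
              rw [Fin.lt_def, hqv, hqv] at hbc
              split_ifs at hbc <;> omega
            have hv1 : ((τ ja : Fin m) : ℕ) < ((τ jc : Fin m) : ℕ) := by
              rw [hσs, hσs, Fin.lt_def, hsv, hsv] at h1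
              split_ifs at h1 <;> omega
            have hv2 : ((τ jc : Fin m) : ℕ) < ((τ jb : Fin m) : ℕ) := by
              rw [hσs, hσs, Fin.lt_def, hsv, hsv] at h2
              split_ifs at h2 <;> omega
            exact hτav ja jb jc (by rw [Fin.lt_def]; omega) (by rw [Fin.lt_def]; omega)
              ⟨by rw [Fin.lt_def]; omega, by rw [Fin.lt_def]; omega⟩
    -- the encoding of σ is A
    have henc : encA σ = A := by
      have himg : (NMval σ).image code = A.erase 0 := by
        ext x
        rw [Finset.mem_image]
        constructor
        · rintro ⟨y, hy, rfl⟩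
          rw [NMval, Finset.mem_image] at hy
          obtain ⟨b, hbpos, rfl⟩ := hy
          rw [hpos] at hbpos
          by_cases hbq : b = q
          · subst hbq
            rw [hσq]
            have hcw : code w = aM := by
              apply Fin.ext
              rw [code_of_ne (by rw [hwval]; omega), hwval]
              omega
            rw [hcw]
            refine Finset.mem_erase.2 ⟨?_, haMA⟩
            intro h
            have := congrArg Fin.val h
            simp only [Fin.val_zero] at this
            omega
          · obtain ⟨j, rfl⟩ := Fin.exists_succAbove_eq hbq
            rw [hσs]
            have hjB' : j ∈ B' := by
              rw [hB']
              exact Finset.mem_filter.2 ⟨Finset.mem_univ _, hbpos⟩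
            have hτjNM : τ j ∈ NMval τ := by
              rw [NMval, Finset.mem_image]
              exact ⟨j, by rw [hτpos]; exact hjB', rfl⟩
            have hge := hvalge _ hτjNM
            rw [hNMvalτ, Finset.mem_image] at hτjNM
            obtain ⟨a, ha, hac⟩ := hτjNM
            rw [Finset.mem_erase] at ha
            have ha0 : (a : ℕ) ≠ 0 := by
              intro h
              exact ha.1 (Fin.ext (by simp only [Fin.val_zero]; omega))
            have hcav : ((code a : Fin m) : ℕ) = m - (a : ℕ) := code_of_ne ha0
            have halt := hA'lt a ha.2
            have hσval : ((w.succAbove (τ j) : Fin (m+1)) : ℕ) = ((τ j : Fin m) : ℕ) + 1 := by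
              rw [hsv, if_neg (by omega)]
            have hcode : code (w.succAbove (τ j)) = (Fin.last m).succAbove a := by
              apply Fin.ext
              rw [code_of_ne (by rw [hσval]; omega), hσval, succAbove_val,
                if_pos (by rw [Fin.val_last]; exact a.isLt)]
              have hτv : ((τ j : Fin m) : ℕ) = m - (a : ℕ) := by
                rw [← hac]
                exact hcav
              have hax := a.isLt
              omega
            rw [hcode]
            have haA' := ha.2
            rw [hA', Finset.mem_filter] at haA'
            have hmem := haA'.2
            rw [Finset.mem_erase] at hmem ⊢
            refine ⟨?_, hmem.2⟩
            intro h
            have hvv := congrArg Fin.val h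
            rw [succAbove_val, if_pos (by rw [Fin.val_last]; exact a.isLt)] at hvv
            simp only [Fin.val_zero] at hvv
            exact ha0 hvv
        · intro hx
          rw [Finset.mem_erase] at hx
          obtain ⟨hx0, hxA⟩ := hx
          have hx0' : (x : ℕ) ≠ 0 := by
            intro h
            exact hx0 (Fin.ext (by simp only [Fin.val_zero]; omega))
          by_cases hxaM : x = aM
          · subst hxaM
            refine ⟨w, ?_, ?_⟩
            · rw [NMval, Finset.mem_image]
              exact ⟨q, by rw [hpos]; exact hqB, hσq⟩
            · apply Fin.ext
              rw [code_of_ne (by rw [hwval]; omega), hwval]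
              omega
          · have hxe : x ∈ A.erase aM := Finset.mem_erase.2 ⟨hxaM, hxA⟩
            have hxm := hAe x hxe
            have hpx : ((⟨(x : ℕ), hxm⟩ : Fin m) : ℕ) = (x : ℕ) := rfl
            have hsA : (Fin.last m).succAbove ⟨(x : ℕ), hxm⟩ = x := by
              apply Fin.ext
              rw [succAbove_val, if_pos (by rw [Fin.val_last]; exact hxm)]
            have haA' : (⟨(x : ℕ), hxm⟩ : Fin m) ∈ A' := by
              rw [hA', Finset.mem_filter]
              refine ⟨Finset.mem_univ _, ?_⟩
              rw [hsA]
              exact hxe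
            have ha0 : ((⟨(x : ℕ), hxm⟩ : Fin m) : ℕ) ≠ 0 := hx0'
            have hca : code (⟨(x : ℕ), hxm⟩ : Fin m) ∈ NMval τ := by
              rw [hNMvalτ, Finset.mem_image]
              refine ⟨⟨(x : ℕ), hxm⟩, ?_, rfl⟩
              refine Finset.mem_erase.2 ⟨?_, haA'⟩
              intro h
              have := congrArg Fin.val h
              simp only [Fin.val_zero] at this
              exact ha0 this
            rw [NMval, Finset.mem_image] at hca
            obtain ⟨j, hjpos, hjval⟩ := hca
            rw [hτpos, hB', Finset.mem_filter] at hjpos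
            refine ⟨σ (q.succAbove j), ?_, ?_⟩
            · rw [NMval, Finset.mem_image]
              exact ⟨q.succAbove j, by rw [hpos]; exact hjpos.2, rfl⟩
            · rw [hσs]
              have hcaval : ((code (⟨(x : ℕ), hxm⟩ : Fin m) : Fin m) : ℕ) = m - (x : ℕ) :=
                code_of_ne ha0
              have hge : w0 ≤ ((τ j : Fin m) : ℕ) := by
                have h1 : ((τ j : Fin m) : ℕ) = m - (x : ℕ) := by
                  rw [hjval]
                  exact hcaval
                have h2 := hA'lt _ haA'
                rw [hpx] at h2
                rw [h1, hw0]
                omega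
              have hσval : ((w.succAbove (τ j) : Fin (m+1)) : ℕ) = ((τ j : Fin m) : ℕ) + 1 := by
                rw [hsv, if_neg (by omega)]
              apply Fin.ext
              rw [code_of_ne (by rw [hσval]; omega), hσval, hjval, hcaval]
              have := x.isLt
              omega
      rw [encA, himg, Finset.insert_erase h0A]
    exact ⟨σ, hav, hpos, henc⟩

section Cycle

variable [NeZero n]

/-- index in `Fin n` of a natural number, reduced mod `n`. -/
def idx (n : ℕ) [NeZero n] (p : ℕ) : Fin n :=
  ⟨p % n, Nat.mod_lt _ (Nat.pos_of_ne_zero (NeZero.ne n))⟩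

lemma idx_add_n (p : ℕ) : idx n (p + n) = idx n p := by
  simp [idx, Nat.add_mod_right]

/-- partial sums of the indicator sequence of `X`, extended periodically. -/
def Fc (X : Finset (Fin n)) (t : ℕ) : ℕ :=
  ∑ p ∈ Finset.range t, (if idx n p ∈ X then 1 else 0)

lemma Fc_succ (X : Finset (Fin n)) (t : ℕ) :
    Fc X (t + 1) = Fc X t + (if idx n t ∈ X then 1 else 0) :=
  Finset.sum_range_succ _ _

lemma Fc_add (X : Finset (Fin n)) (a b : ℕ) :
    Fc X (a + b) = Fc X a + ∑ p ∈ Finset.range b, (if idx n (a + p) ∈ X then 1 else 0) := by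
  induction b with
  | zero => simp
  | succ b ih =>
    rw [← Nat.add_assoc, Fc_succ, ih, Finset.sum_range_succ, Nat.add_assoc]

lemma Fc_n_card (X : Finset (Fin n)) : Fc X n = X.card := by
  have h : Fc X n = ((Finset.range n).filter (fun p => idx n p ∈ X)).card := by
    unfold Fc
    rw [Finset.sum_boole, Nat.cast_id]
  rw [h]
  apply Finset.card_bij (fun p hp => idx n p)
  · intro a ha; exact (Finset.mem_filter.1 ha).2
  · intro a ha b hb hab
    have ha' := Finset.mem_range.1 (Finset.mem_filter.1 ha).1
    have hb' := Finset.mem_range.1 (Finset.mem_filter.1 hb).1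
    have : a % n = b % n := congrArg Fin.val hab
    rwa [Nat.mod_eq_of_lt ha', Nat.mod_eq_of_lt hb'] at this
  · intro x hx
    refine ⟨(x : ℕ), Finset.mem_filter.2 ⟨Finset.mem_range.2 x.isLt, ?_⟩, ?_⟩
    · have : idx n (x : ℕ) = x := by
        apply Fin.ext; simp [idx, Nat.mod_eq_of_lt x.isLt]
      rwa [this]
    · apply Fin.ext; simp [idx, Nat.mod_eq_of_lt x.isLt]

lemma Fc_add_n (X : Finset (Fin n)) (t : ℕ) :
    Fc X (n + t) = X.card + Fc X t := by
  rw [Fc_add, ← Fc_n_card (X := X)]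
  congr 1
  apply Finset.sum_congr rfl
  intro p _
  rw [show n + p = p + n by omega, idx_add_n]

lemma cnt_zero (X : Finset (Fin n)) : cnt X 0 = 0 := by
  simp [cnt]

lemma cnt_n_card (X : Finset (Fin n)) : cnt X n = X.card := by
  unfold cnt
  rw [Finset.filter_true_of_mem (fun i _ => i.isLt), ]

lemma cnt_succ (X : Finset (Fin n)) {t : ℕ} (ht : t < n) :
    cnt X (t + 1) = cnt X t + (if (⟨t, ht⟩ : Fin n) ∈ X then 1 else 0) := by
  unfold cnt
  have hsplit : X.filter (fun i : Fin n => (i : ℕ) < t + 1)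
      = X.filter (fun i : Fin n => (i : ℕ) < t) ∪ X.filter (fun i : Fin n => (i : ℕ) = t) := by
    rw [← Finset.filter_or]
    apply Finset.filter_congr
    intro i _
    constructor
    · intro h; omega
    · intro h; omega
  rw [hsplit, Finset.card_union_of_disjoint]
  · congr 1
    by_cases hm : (⟨t, ht⟩ : Fin n) ∈ X
    · rw [if_pos hm]
      rw [Finset.card_eq_one]
      refine ⟨⟨t, ht⟩, ?_⟩
      ext i
      simp only [Finset.mem_filter, Finset.mem_singleton]
      constructor
      · rintro ⟨hiX, hit⟩; exact Fin.ext hit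
      · rintro rfl; exact ⟨hm, rfl⟩
    · rw [if_neg hm, Finset.card_eq_zero, Finset.filter_eq_empty_iff]
      intro i hi hit
      exact hm (by rwa [show (⟨t, ht⟩ : Fin n) = i from (Fin.ext hit.symm)])
  · rw [Finset.disjoint_filter]
    intro i _ h1 h2
    omega

lemma Fc_eq_cnt (X : Finset (Fin n)) {t : ℕ} (ht : t ≤ n) : Fc X t = cnt X t := by
  induction t with
  | zero => simp [Fc, cnt_zero]
  | succ t ih =>
    have ht' : t < n := ht
    have hidxt : idx n t = (⟨t, ht'⟩ : Fin n) := Fin.ext (by simp [idx, Nat.mod_eq_of_lt ht'])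
    rw [Fc_succ, hidxt, cnt_succ X ht', ih (le_of_lt ht')]

/-- the integer-valued height function. -/
def Hc (X Y : Finset (Fin n)) (t : ℕ) : ℤ := (Fc X t : ℤ) - (Fc Y t : ℤ)

/-- `s` is a "good point" of the combined walk. -/
def GPt (X Y : Finset (Fin n)) (s : ℕ) : Prop :=
  ∀ u, 1 ≤ u → u ≤ n → Hc X Y s + 1 ≤ Hc X Y (s + u)

lemma Hc_add_n {X Y : Finset (Fin n)} (hc : X.card = Y.card + 1) (t : ℕ) :
    Hc X Y (n + t) = Hc X Y t + 1 := by
  unfold Hc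
  rw [Fc_add_n, Fc_add_n, hc]
  push_cast
  ring

lemma GPt_shift {X Y : Finset (Fin n)} (hc : X.card = Y.card + 1) (s : ℕ) :
    GPt X Y (s + n) ↔ GPt X Y s := by
  unfold GPt
  have h1 : ∀ u, Hc X Y (s + n + u) = Hc X Y (s + u) + 1 := by
    intro u
    rw [show s + n + u = n + (s + u) by omega, Hc_add_n hc]
  have h2 : Hc X Y (s + n) = Hc X Y s + 1 := by
    rw [show s + n = n + s by omega, Hc_add_n hc]
  constructor
  · intro h u hu1 hu2
    have := h u hu1 hu2
    rw [h1 u, h2] at this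
    omega
  · intro h u hu1 hu2
    have := h u hu1 hu2
    rw [h1 u, h2]
    omega

/-- the mod-arithmetic helper. -/
lemma add_mod_helper (a b : ℕ) : (a + b % n) % n = (a + b) % n := by
  rw [Nat.add_mod, Nat.mod_mod_of_dvd _ dvd_rfl, ← Nat.add_mod]

lemma cnt_rot (X : Finset (Fin n)) (r : Fin n) {t : ℕ} (ht : t ≤ n) :
    cnt (X.image (· + r)) t + Fc X (n - (r : ℕ)) = Fc X ((n - (r : ℕ)) + t) := by
  classical
  have hn0 : 0 < n := Nat.pos_of_ne_zero (NeZero.ne n)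
  rw [Fc_add]
  have key : cnt (X.image (· + r)) t
      = ∑ p ∈ Finset.range t, (if idx n ((n - (r : ℕ)) + p) ∈ X then 1 else 0) := by
    rw [Finset.sum_boole, Nat.cast_id]
    unfold cnt
    rw [Finset.filter_image]
    rw [Finset.card_image_of_injective _ (add_left_injective r)]
    refine Finset.card_bij (fun x _ => ((x : ℕ) + (r : ℕ)) % n) ?_ ?_ ?_
    · intro x hx
      rw [Finset.mem_filter] at hx
      rcases hx with ⟨hxX, hxt⟩
      have hv : ((x + r : Fin n) : ℕ) = ((x : ℕ) + (r : ℕ)) % n := Fin.val_add x r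
      rw [Finset.mem_filter, Finset.mem_range]
      refine ⟨by omega, ?_⟩
      have hidx : idx n ((n - (r : ℕ)) + (((x : ℕ) + (r : ℕ)) % n)) = x := by
        apply Fin.ext
        simp only [idx]
        rw [add_mod_helper, show n - (r : ℕ) + ((x : ℕ) + (r : ℕ)) = n + (x : ℕ) by
          have := r.isLt; omega]
        rw [Nat.add_mod_left, Nat.mod_eq_of_lt x.isLt]
      rwa [hidx]
    · intro a ha b hb hab
      rw [Finset.mem_filter] at ha hb
      have hida : idx n ((n - (r : ℕ)) + (((a : ℕ) + (r : ℕ)) % n)) = a := by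
        apply Fin.ext
        simp only [idx]
        rw [add_mod_helper, show n - (r : ℕ) + ((a : ℕ) + (r : ℕ)) = n + (a : ℕ) by
          have := r.isLt; omega]
        rw [Nat.add_mod_left, Nat.mod_eq_of_lt a.isLt]
      have hidb : idx n ((n - (r : ℕ)) + (((b : ℕ) + (r : ℕ)) % n)) = b := by
        apply Fin.ext
        simp only [idx]
        rw [add_mod_helper, show n - (r : ℕ) + ((b : ℕ) + (r : ℕ)) = n + (b : ℕ) by
          have := r.isLt; omega]
        rw [Nat.add_mod_left, Nat.mod_eq_of_lt b.isLt]
      rw [← hida, ← hidb, hab]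
    · intro p hp
      rw [Finset.mem_filter, Finset.mem_range] at hp
      rcases hp with ⟨hpt, hpX⟩
      refine ⟨idx n ((n - (r : ℕ)) + p), Finset.mem_filter.2 ⟨hpX, ?_⟩, ?_⟩
      · have hv : ((idx n ((n - (r : ℕ)) + p) + r : Fin n) : ℕ)
            = (((idx n ((n - (r : ℕ)) + p) : Fin n) : ℕ) + (r : ℕ)) % n := Fin.val_add _ _
        rw [hv]
        simp only [idx]
        rw [Nat.add_mod, Nat.mod_mod_of_dvd _ dvd_rfl, ← Nat.add_mod]
        rw [show n - (r : ℕ) + p + (r : ℕ) = n + p by have := r.isLt; omega]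
        rw [Nat.add_mod_left, Nat.mod_eq_of_lt (by omega)]
        omega
      · simp only [idx]
        rw [Nat.add_mod, Nat.mod_mod_of_dvd _ dvd_rfl, ← Nat.add_mod]
        rw [show n - (r : ℕ) + p + (r : ℕ) = n + p by have := r.isLt; omega]
        rw [Nat.add_mod_left, Nat.mod_eq_of_lt (by omega)]
  rw [key]
  omega

lemma rot_good (X Y : Finset (Fin n)) (r : Fin n) :
    IsGood (X.image (· + r)) (Y.image (· + r)) ↔ GPt X Y (n - (r : ℕ)) := by
  rw [isGood_iff]
  unfold GPt
  have main : ∀ t, 0 < t → t ≤ n →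
      ((cnt (Y.image (· + r)) t < cnt (X.image (· + r)) t) ↔
        (Hc X Y (n - (r : ℕ)) + 1 ≤ Hc X Y ((n - (r : ℕ)) + t))) := by
    intro t ht1 ht2
    have hX := cnt_rot X r ht2
    have hY := cnt_rot Y r ht2
    unfold Hc
    omega
  constructor
  · intro h u hu1 hu2
    exact (main u hu1 hu2).1 (h u hu1 hu2)
  · intro h t ht1 ht2
    exact (main t ht1 ht2).2 (h t ht1 ht2)

lemma exists_GPt {X Y : Finset (Fin n)} (hc : X.card = Y.card + 1) :
    ∃ s, s < n ∧ GPt X Y s := by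
  classical
  have hn0 : 0 < n := Nat.pos_of_ne_zero (NeZero.ne n)
  have hSne : ((Finset.range n).image (fun s => Hc X Y s)).Nonempty :=
    ⟨Hc X Y 0, Finset.mem_image.2 ⟨0, Finset.mem_range.2 hn0, rfl⟩⟩
  obtain ⟨M, hMmem, hMle⟩ : ∃ M, M ∈ ((Finset.range n).image (fun s => Hc X Y s)) ∧
      ∀ v ∈ (Finset.range n).image (fun s => Hc X Y s), M ≤ v :=
    ⟨_, Finset.min'_mem _ hSne, fun v hv => Finset.min'_le _ v hv⟩
  have hTne : ((Finset.range n).filter (fun s => Hc X Y s = M)).Nonempty := by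
    rcases Finset.mem_image.1 hMmem with ⟨s, hs, hsv⟩
    exact ⟨s, Finset.mem_filter.2 ⟨hs, hsv⟩⟩
  obtain ⟨s₀, hs₀mem, hs₀max⟩ : ∃ s₀, s₀ ∈ ((Finset.range n).filter (fun s => Hc X Y s = M)) ∧
      ∀ x ∈ (Finset.range n).filter (fun s => Hc X Y s = M), x ≤ s₀ :=
    ⟨_, Finset.max'_mem _ hTne, fun x hx => Finset.le_max' _ x hx⟩
  rw [Finset.mem_filter, Finset.mem_range] at hs₀mem
  refine ⟨s₀, hs₀mem.1, ?_⟩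
  intro u hu1 hu2
  have hmin : ∀ v, v < n → M ≤ Hc X Y v := fun v hv =>
    hMle _ (Finset.mem_image.2 ⟨v, Finset.mem_range.2 hv, rfl⟩)
  by_cases hcase : s₀ + u < n
  · have h1 : M ≤ Hc X Y (s₀ + u) := hmin _ hcase
    have h2 : Hc X Y (s₀ + u) ≠ M := by
      intro heq
      have hmem : s₀ + u ∈ (Finset.range n).filter (fun s => Hc X Y s = M) :=
        Finset.mem_filter.2 ⟨Finset.mem_range.2 hcase, heq⟩
      have := hs₀max _ hmem
      omega
    rw [hs₀mem.2]
    omega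
  · push_neg at hcase
    have hv : s₀ + u - n < n := by omega
    have heq : s₀ + u = n + (s₀ + u - n) := by omega
    rw [heq, Hc_add_n hc]
    have := hmin (s₀ + u - n) hv
    rw [hs₀mem.2]
    omega

lemma unique_GPt {X Y : Finset (Fin n)} (hc : X.card = Y.card + 1)
    {s s' : ℕ} (hs : s < n) (hs' : s' < n) (hg : GPt X Y s) (hg' : GPt X Y s') :
    s = s' := by
  by_contra hne
  -- wlog s < s'
  have key : ∀ a b, a < n → b < n → a < b → GPt X Y a → GPt X Y b → False := by
    intro a b han hbn hab ha hb
    have h1 : Hc X Y a + 1 ≤ Hc X Y b := by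
      have := ha (b - a) (by omega) (by omega)
      rwa [show a + (b - a) = b by omega] at this
    have h2 : Hc X Y b + 1 ≤ Hc X Y (b + (n + a - b)) := hb (n + a - b) (by omega) (by omega)
    rw [show b + (n + a - b) = n + a by omega, Hc_add_n hc] at h2
    omega
  rcases lt_trichotomy s s' with h | h | h
  · exact key s s' hs hs' h hg hg'
  · exact hne h
  · exact key s' s hs' hs h hg' hg

lemma rot_rot (X : Finset (Fin n)) (a b : Fin n) :
    (X.image (· + a)).image (· + b) = X.image (· + (a + b)) := by
  rw [Finset.image_image]
  apply Finset.image_congr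
  intro x _
  simp [add_assoc]

lemma rot_neg_cancel (X : Finset (Fin n)) (r : Fin n) :
    (X.image (· + r)).image (· + (-r)) = X := by
  rw [rot_rot]
  simp

lemma hatval (r : Fin n) : (n - ((-r : Fin n) : ℕ)) % n = (r : ℕ) := by
  have hn0 : 0 < n := Nat.pos_of_ne_zero (NeZero.ne n)
  by_cases h : r = 0
  · subst h; simp
  · have hr0 : 0 < (r : ℕ) := by
      rcases Nat.eq_zero_or_pos (r : ℕ) with h0 | h0
      · exact absurd (Fin.ext h0 : r = 0) h
      · exact h0
    have : ((-r : Fin n) : ℕ) = n - (r : ℕ) := by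
      rw [Fin.coe_neg]
      rw [Nat.mod_eq_of_lt (by have := r.isLt; omega)]
    rw [this]
    have := r.isLt
    rw [show n - (n - (r : ℕ)) = (r : ℕ) by omega, Nat.mod_eq_of_lt r.isLt]

/-- goodness of a pair reduced via rotation to a good point of the rotated pair. -/
lemma good_iff_GPt_rot (X Y : Finset (Fin n)) (hc : X.card = Y.card + 1) (r : Fin n) :
    IsGood (X.image (· + (-r))) (Y.image (· + (-r))) ↔ GPt X Y (r : ℕ) := by
  rw [rot_good]
  have hn0 : 0 < n := Nat.pos_of_ne_zero (NeZero.ne n)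
  by_cases h : r = 0
  · subst h
    simp only [Fin.val_zero, neg_zero]
    rw [show n - 0 = 0 + n by omega]
    exact GPt_shift hc 0
  · have hr0 : 0 < (r : ℕ) := by
      rcases Nat.eq_zero_or_pos (r : ℕ) with h0 | h0
      · exact absurd (Fin.ext h0 : r = 0) h
      · exact h0
    have hneg : ((-r : Fin n) : ℕ) = n - (r : ℕ) := by
      rw [Fin.coe_neg, Nat.mod_eq_of_lt (by have := r.isLt; omega)]
    rw [hneg, show n - (n - (r : ℕ)) = (r : ℕ) by have := r.isLt; omega]

theorem cycle_count (k : ℕ) :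
    n * (GoodPairs n k).card = n.choose (k + 1) * n.choose k := by
  classical
  have hn0 : 0 < n := Nat.pos_of_ne_zero (NeZero.ne n)
  have hR : ((Finset.univ.powersetCard (k + 1) : Finset (Finset (Fin n))) ×ˢ
      (Finset.univ.powersetCard k : Finset (Finset (Fin n)))).card
      = n.choose (k + 1) * n.choose k := by
    rw [Finset.card_product, Finset.card_powersetCard, Finset.card_powersetCard,
      Finset.card_univ, Fintype.card_fin]
  have hL : ((Finset.univ : Finset (Fin n)) ×ˢ GoodPairs n k).card
      = n * (GoodPairs n k).card := by
    rw [Finset.card_product, Finset.card_univ, Fintype.card_fin]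
  rw [← hL, ← hR]
  apply Finset.card_bij
    (fun p _ => (p.2.1.image (· + p.1), p.2.2.image (· + p.1)))
  · rintro ⟨r, A, B⟩ hp
    rw [Finset.mem_product] at hp
    rcases hp with ⟨-, hAB⟩
    rw [GoodPairs, Finset.mem_filter] at hAB
    rcases hAB with ⟨-, hA, hB, hg⟩
    rw [Finset.mem_product, Finset.mem_powersetCard_univ, Finset.mem_powersetCard_univ]
    constructor
    · rw [Finset.card_image_of_injective _ (add_left_injective r)]; exact hA
    · rw [Finset.card_image_of_injective _ (add_left_injective r)]; exact hB
  · rintro ⟨r, A, B⟩ hp ⟨r', A', B'⟩ hp' heq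
    rw [Finset.mem_product, GoodPairs, Finset.mem_filter] at hp hp'
    rcases hp with ⟨-, -, hA, hB, hg⟩
    rcases hp' with ⟨-, -, hA', hB', hg'⟩
    have hXeq : A.image (· + r) = A'.image (· + r') := congrArg Prod.fst heq
    have hYeq : B.image (· + r) = B'.image (· + r') := congrArg Prod.snd heq
    set X := A.image (· + r) with hX
    set Y := B.image (· + r) with hY
    have hcX : X.card = Y.card + 1 := by
      rw [hX, hY, Finset.card_image_of_injective _ (add_left_injective r),
        Finset.card_image_of_injective _ (add_left_injective r), hA, hB]
    have hback : A = X.image (· + (-r)) := by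
      rw [hX, rot_neg_cancel]
    have hback2 : B = Y.image (· + (-r)) := by
      rw [hY, rot_neg_cancel]
    have hback' : A' = X.image (· + (-r')) := by
      rw [hXeq, rot_neg_cancel]
    have hback2' : B' = Y.image (· + (-r')) := by
      rw [hYeq, rot_neg_cancel]
    have hg1 : GPt X Y (r : ℕ) := by
      rw [← good_iff_GPt_rot X Y hcX r, ← hback, ← hback2]; exact hg
    have hg2 : GPt X Y (r' : ℕ) := by
      rw [← good_iff_GPt_rot X Y hcX r', ← hback', ← hback2']; exact hg'
    have : (r : ℕ) = (r' : ℕ) := unique_GPt hcX r.isLt r'.isLt hg1 hg2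
    have hrr : r = r' := Fin.ext this
    subst hrr
    have hAA : A = A' := by rw [hback, hback']
    have hBB : B = B' := by rw [hback2, hback2']
    rw [hAA, hBB]
  · rintro ⟨X, Y⟩ hXY
    rw [Finset.mem_product, Finset.mem_powersetCard_univ, Finset.mem_powersetCard_univ] at hXY
    rcases hXY with ⟨hXc, hYc⟩
    dsimp only at hXc hYc
    have hcX : X.card = Y.card + 1 := by omega
    obtain ⟨s, hsn, hgs⟩ := exists_GPt hcX
    set r : Fin n := ⟨s, hsn⟩ with hr
    refine ⟨(r, X.image (· + (-r)), Y.image (· + (-r))), ?_, ?_⟩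
    · rw [Finset.mem_product]
      refine ⟨Finset.mem_univ _, ?_⟩
      rw [GoodPairs, Finset.mem_filter]
      refine ⟨Finset.mem_univ _, ?_, ?_, ?_⟩
      · rw [Finset.card_image_of_injective _ (add_left_injective (-r)), hXc]
      · rw [Finset.card_image_of_injective _ (add_left_injective (-r)), hYc]
      · rw [good_iff_GPt_rot X Y hcX r]
        exact hgs
    · simp only
      rw [rot_rot, rot_rot]
      simp

end Cycle

/-! ### glue -/

lemma NMval_eq_of_encA [NeZero n] {σ τ : Equiv.Perm (Fin n)} (h : encA σ = encA τ) :
    NMval σ = NMval τ := by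
  rw [NMval_eq_image_code_erase, NMval_eq_image_code_erase, h]

lemma mmp_eq (σ : Equiv.Perm (Fin n)) : mmp n 0 0 1 0 σ = (NMpos σ).card := by
  classical
  unfold mmp
  have hset : {i : Fin n |
      0 ≤ Nat.card {j : Fin n | i < j ∧ σ i < σ j} ∧
      0 ≤ Nat.card {j : Fin n | j < i ∧ σ i < σ j} ∧
      1 ≤ Nat.card {j : Fin n | j < i ∧ σ j < σ i} ∧
      0 ≤ Nat.card {j : Fin n | i < j ∧ σ j < σ i}} = {i : Fin n | IsNM σ i} := by
    ext i
    simp only [Set.mem_setOf_eq, Nat.zero_le, true_and, and_true]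
    rw [Nat.one_le_iff_ne_zero, ← Nat.pos_iff_ne_zero, Nat.card_pos_iff]
    constructor
    · rintro ⟨⟨⟨j, hj⟩⟩, -⟩; exact ⟨j, hj⟩
    · rintro ⟨j, hj⟩
      exact ⟨⟨⟨j, hj⟩⟩, Set.finite_coe_iff.2 (Set.toFinite _)⟩
  rw [hset]
  rw [Nat.card_eq_fintype_card]
  rw [Fintype.card_subtype]
  rfl

lemma natCard_set_eq_filter (p : Equiv.Perm (Fin n) → Prop) [DecidablePred p] :
    Nat.card {σ : Equiv.Perm (Fin n) | p σ} = (Finset.univ.filter p).card := by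
  rw [Nat.card_eq_fintype_card, Fintype.card_subtype]
  simp

end MMP132

open MMP132 Finset in
/-- The number of 132-avoiding permutations of `{1,…,n}` with `mmp(0,0,1,0)(σ) = k`
equals the Narayana number `N(n,k+1) = (1/n) * choose n k * choose n (k+1)`
(stated multiplied through by `n` to avoid rational arithmetic). -/
theorem card_mmp0010_eq_narayana (n k : ℕ) (hn : 1 ≤ n) (hk : k ≤ n - 1) :
    n * Nat.card {σ : Equiv.Perm (Fin n) | Avoids132 n σ ∧ mmp n 0 0 1 0 σ = k} =
    n.choose k * n.choose (k + 1) := by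
  haveI : NeZero n := ⟨by omega⟩
  classical
  have hre : {σ : Equiv.Perm (Fin n) | Avoids132 n σ ∧ mmp n 0 0 1 0 σ = k} =
      {σ : Equiv.Perm (Fin n) | Avoids132 n σ ∧ (NMpos σ).card = k} := by
    ext σ; simp [mmp_eq]
  rw [hre, natCard_set_eq_filter]
  have hbij : (Finset.univ.filter
      (fun σ : Equiv.Perm (Fin n) => Avoids132 n σ ∧ (NMpos σ).card = k)).card
      = (GoodPairs n k).card := by
    apply Finset.card_bij (fun σ _ => (encA σ, NMpos σ))
    · intro σ hσ
      rw [Finset.mem_filter] at hσ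
      rcases hσ.2 with ⟨hav, hkk⟩
      rw [GoodPairs, Finset.mem_filter]
      exact ⟨Finset.mem_univ _, by rw [card_encA, hkk], hkk, good_encA σ⟩
    · intro σ hσ τ hτ h
      rw [Finset.mem_filter] at hσ hτ
      have h1 : encA σ = encA τ := congrArg Prod.fst h
      have h2 : NMpos σ = NMpos τ := congrArg Prod.snd h
      exact avoider_eq hσ.2.1 hτ.2.1 h2 (NMval_eq_of_encA h1)
    · intro p hp
      rw [GoodPairs, Finset.mem_filter] at hp
      rcases hp with ⟨-, hA, hB, hg⟩
      obtain ⟨σ, hav, hpos, henc⟩ := exists_avoider k p.1 p.2 hA hB hg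
      refine ⟨σ, ?_, ?_⟩
      · rw [Finset.mem_filter]
        exact ⟨Finset.mem_univ _, hav, by rw [hpos, hB]⟩
      · rw [henc, hpos]
  rw [hbij, cycle_count, Nat.mul_comm]
end
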